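/- arXiv:2206.00750 — 5 statements merged into one kernel-verified Lean document; each statement's English description precedes it below -/
import Mathlib

section
/- Let a be a sequence of mild signature, and for each natural number n let s(n) denote the sum of the digits of n when written greedily in base a, i.e., s(n) = ∑_i c_i where n = ∑_i c_i·a(i) is the greedy representation. If γ is an irrational real number, then the sequence γ·s(n) is equidistributed modulo 1: for every nonzero integer d, (1/N)·∑_{n=0}^{N−1} e(d·γ·s(n)) → 0 as N → ∞. -/
open Filter

/-- Distance from a real number to the nearest integer. -/
noncomputable def distToInt (x : ℝ) : ℝ := |x - round x|

/-- `e x = exp (2 π i x)`. -/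
noncomputable def expCirc (x : ℝ) : ℂ := Complex.exp (2 * Real.pi * Complex.I * x)

/-- Auxiliary fueled greedy algorithm: given the base sequence `a` and a remainder `r`,
repeatedly subtract the largest `a i` (with `i ≥ 1`) not exceeding the remainder,
recording the list of indices used (with multiplicity). -/
def greedyIdxAux (a : ℕ → ℕ) : ℕ → ℕ → List ℕ
  | 0, _ => []
  | fuel + 1, r =>
    if r = 0 then []
    else
      let i := Nat.findGreatest (fun j => 1 ≤ j ∧ a j ≤ r) r
      i :: greedyIdxAux a fuel (r - a i)

/-- The list of indices (with multiplicity) appearing in the greedy representation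
of `n` in base `a`: `n = ∑_{i ∈ greedyIdx a n} a i`, where at each step the largest
`a i` not exceeding the remainder is subtracted. -/
def greedyIdx (a : ℕ → ℕ) (n : ℕ) : List ℕ := greedyIdxAux a n n

/-- Auxiliary fueled greedy algorithm with the indices capped by `cap`. -/
def greedyIdxCapAux (a : ℕ → ℕ) (cap : ℕ) : ℕ → ℕ → List ℕ
  | 0, _ => []
  | fuel + 1, r =>
    if r = 0 then []
    else
      let i := Nat.findGreatest (fun j => 1 ≤ j ∧ j ≤ cap ∧ a j ≤ r) r
      i :: greedyIdxCapAux a cap fuel (r - a i)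

/-- The greedy representation of `n` in base `a` using only indices `≤ cap`. -/
def greedyIdxCap (a : ℕ → ℕ) (cap n : ℕ) : List ℕ := greedyIdxCapAux a cap n n

/-- A strictly increasing sequence `a` with `a 1 = 1` has *mild signature* if:
(i) there is a constant `L` such that for every `n ≥ 2` the greedy representation
of `a n` in base `a` using only earlier terms `a 1, …, a (n-1)` only uses the
terms `a (n-1), …, a (n-L)`; and (ii) there are reals `r, s > 1` with
`r · a n < a (n+1) < s · a n` for every `n ≥ 1`. -/
structure MildSignature (a : ℕ → ℕ) : Prop where
  a_one : a 1 = 1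
  mono : ∀ n, 1 ≤ n → a n < a (n + 1)
  signature : ∃ L : ℕ, ∀ n, 2 ≤ n → ∀ i ∈ greedyIdxCap a (n - 1) (a n), n ≤ i + L
  growth : ∃ r s : ℝ, 1 < r ∧ 1 < s ∧ ∀ n, 1 ≤ n →
    r * (a n : ℝ) < (a (n + 1) : ℝ) ∧ (a (n + 1) : ℝ) < s * (a n : ℝ)

/-- The replacement sequence of `a` by `b`: write `n` greedily in base `a` and
replace each occurrence of `a i` by `b i`. -/
def replSeq (a : ℕ → ℕ) (b : ℕ → ℤ) (n : ℕ) : ℤ := ((greedyIdx a n).map b).sum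

/-- The sum of the digits of `n` written greedily in base `a`. -/
def greedyDigitSum (a : ℕ → ℕ) (n : ℕ) : ℕ := (greedyIdx a n).length

namespace GDS

def fIdx (a : ℕ → ℕ) (N : ℕ) : ℕ := Nat.findGreatest (fun j => 1 ≤ j ∧ a j ≤ N) N

def fIdxC (a : ℕ → ℕ) (cap N : ℕ) : ℕ :=
  Nat.findGreatest (fun j => 1 ≤ j ∧ j ≤ cap ∧ a j ≤ N) N

section Basics

variable {a : ℕ → ℕ} (h1 : a 1 = 1) (hmono : ∀ n, 1 ≤ n → a n < a (n + 1))

include hmono in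
lemma a_mono : ∀ {i j}, 1 ≤ i → i ≤ j → a i ≤ a j := by
  intro i j hi hij
  induction j with
  | zero => omega
  | succ j ih =>
    rcases Nat.eq_or_lt_of_le hij with h | h
    · subst h; rfl
    · have hij' : i ≤ j := by omega
      exact le_trans (ih hij') (le_of_lt (hmono j (le_trans hi hij')))

include hmono in
lemma a_strict : ∀ {i j}, 1 ≤ i → i < j → a i < a j := by
  intro i j hi hij
  have ha : a i ≤ a (j - 1) := a_mono hmono hi (by omega)
  have hb := hmono (j - 1) (by omega)
  have hc : j - 1 + 1 = j := by omega
  rw [hc] at hb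
  omega

include h1 hmono in
lemma a_pos : ∀ {i}, 1 ≤ i → 1 ≤ a i := fun hi => h1 ▸ a_mono hmono le_rfl hi

include h1 hmono in
lemma le_a_self : ∀ {i}, 1 ≤ i → i ≤ a i := by
  intro i hi
  induction i with
  | zero => omega
  | succ i ih =>
    rcases Nat.eq_zero_or_pos i with h | h
    · subst h; simp [h1]
    · have hb := hmono i h
      have hc := ih h
      omega

include h1 in
lemma fIdx_spec {N : ℕ} (hN : 1 ≤ N) : 1 ≤ fIdx a N ∧ a (fIdx a N) ≤ N :=
  Nat.findGreatest_spec (P := fun j => 1 ≤ j ∧ a j ≤ N) hN ⟨le_rfl, by rw [h1]; exact hN⟩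

include h1 in
lemma fIdxC_spec {cap N : ℕ} (hcap : 1 ≤ cap) (hN : 1 ≤ N) :
    1 ≤ fIdxC a cap N ∧ fIdxC a cap N ≤ cap ∧ a (fIdxC a cap N) ≤ N :=
  Nat.findGreatest_spec (P := fun j => 1 ≤ j ∧ j ≤ cap ∧ a j ≤ N) hN
    ⟨le_rfl, hcap, by rw [h1]; exact hN⟩

include h1 hmono in
lemma aux_fuel : ∀ fuel fuel' r, r ≤ fuel → r ≤ fuel' →
    greedyIdxAux a fuel r = greedyIdxAux a fuel' r := by
  intro fuel
  induction fuel with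
  | zero =>
    intro fuel' r hr _
    interval_cases r
    cases fuel' <;> simp [greedyIdxAux]
  | succ fuel ih =>
    intro fuel' r hr hr'
    rcases Nat.eq_zero_or_pos r with h0 | h0
    · subst h0; cases fuel' <;> simp [greedyIdxAux]
    · obtain ⟨f', rfl⟩ : ∃ f', fuel' = f' + 1 := ⟨fuel' - 1, by omega⟩
      have hspec := fIdx_spec h1 (N := r) h0
      have hge1 : 1 ≤ a (fIdx a r) := a_pos h1 hmono hspec.1
      simp only [greedyIdxAux, if_neg (by omega : ¬ r = 0)]
      exact congrArg _ (ih f' (r - a (fIdx a r)) (by omega) (by omega))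

include h1 hmono in
lemma greedyIdx_unfold {n : ℕ} (hn : 1 ≤ n) :
    greedyIdx a n = fIdx a n :: greedyIdx a (n - a (fIdx a n)) := by
  obtain ⟨m, rfl⟩ : ∃ m, n = m + 1 := ⟨n - 1, by omega⟩
  have hspec := fIdx_spec h1 (N := m + 1) hn
  have hge1 : 1 ≤ a (fIdx a (m + 1)) := a_pos h1 hmono hspec.1
  show greedyIdxAux a (m + 1) (m + 1) = _
  simp only [greedyIdxAux, if_neg (by omega : ¬ m + 1 = 0)]
  exact congrArg _ (aux_fuel h1 hmono m (m + 1 - a (fIdx a (m + 1)))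
    (m + 1 - a (fIdx a (m + 1))) (by omega) le_rfl)

include h1 hmono in
lemma auxC_fuel {cap : ℕ} (hcap : 1 ≤ cap) : ∀ fuel fuel' r, r ≤ fuel → r ≤ fuel' →
    greedyIdxCapAux a cap fuel r = greedyIdxCapAux a cap fuel' r := by
  intro fuel
  induction fuel with
  | zero =>
    intro fuel' r hr _
    interval_cases r
    cases fuel' <;> simp [greedyIdxCapAux]
  | succ fuel ih =>
    intro fuel' r hr hr'
    rcases Nat.eq_zero_or_pos r with h0 | h0
    · subst h0; cases fuel' <;> simp [greedyIdxCapAux]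
    · obtain ⟨f', rfl⟩ : ∃ f', fuel' = f' + 1 := ⟨fuel' - 1, by omega⟩
      have hspec := fIdxC_spec h1 (cap := cap) (N := r) hcap h0
      have hge1 : 1 ≤ a (fIdxC a cap r) := a_pos h1 hmono hspec.1
      simp only [greedyIdxCapAux, if_neg (by omega : ¬ r = 0)]
      exact congrArg _ (ih f' (r - a (fIdxC a cap r)) (by omega) (by omega))

include h1 hmono in
lemma greedyIdxCap_unfold {cap n : ℕ} (hcap : 1 ≤ cap) (hn : 1 ≤ n) :
    greedyIdxCap a cap n = fIdxC a cap n :: greedyIdxCap a cap (n - a (fIdxC a cap n)) := by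
  obtain ⟨m, rfl⟩ : ∃ m, n = m + 1 := ⟨n - 1, by omega⟩
  have hspec := fIdxC_spec h1 (cap := cap) (N := m + 1) hcap hn
  have hge1 : 1 ≤ a (fIdxC a cap (m + 1)) := a_pos h1 hmono hspec.1
  show greedyIdxCapAux a cap (m + 1) (m + 1) = _
  simp only [greedyIdxCapAux, if_neg (by omega : ¬ m + 1 = 0)]
  exact congrArg _ (auxC_fuel h1 hmono hcap m (m + 1 - a (fIdxC a cap (m + 1)))
    (m + 1 - a (fIdxC a cap (m + 1))) (by omega) le_rfl)

include h1 hmono in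
lemma greedyIdxCap_sum {cap : ℕ} (hcap : 1 ≤ cap) :
    ∀ n, ((greedyIdxCap a cap n).map a).sum = n := by
  intro n
  induction n using Nat.strong_induction_on with
  | _ n ih =>
    rcases Nat.eq_zero_or_pos n with h0 | h0
    · subst h0; rfl
    · have hspec := fIdxC_spec h1 (cap := cap) (N := n) hcap h0
      have hge1 : 1 ≤ a (fIdxC a cap n) := a_pos h1 hmono hspec.1
      rw [greedyIdxCap_unfold h1 hmono hcap h0]
      simp only [List.map_cons, List.sum_cons]
      rw [ih _ (by omega)]
      omega

include h1 hmono in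
lemma greedyIdx_sum : ∀ n, ((greedyIdx a n).map a).sum = n := by
  intro n
  induction n using Nat.strong_induction_on with
  | _ n ih =>
    rcases Nat.eq_zero_or_pos n with h0 | h0
    · subst h0; rfl
    · have hspec := fIdx_spec h1 (N := n) h0
      have hge1 : 1 ≤ a (fIdx a n) := a_pos h1 hmono hspec.1
      rw [greedyIdx_unfold h1 hmono h0]
      simp only [List.map_cons, List.sum_cons]
      rw [ih _ (by omega)]
      omega

include h1 hmono in
lemma greedyIdxCap_mem {cap : ℕ} (hcap : 1 ≤ cap) :
    ∀ n, ∀ i ∈ greedyIdxCap a cap n, 1 ≤ i ∧ i ≤ cap := by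
  intro n
  induction n using Nat.strong_induction_on with
  | _ n ih =>
    rcases Nat.eq_zero_or_pos n with h0 | h0
    · subst h0; intro i hi; simp [greedyIdxCap, greedyIdxCapAux] at hi
    · have hspec := fIdxC_spec h1 (cap := cap) (N := n) hcap h0
      have hge1 : 1 ≤ a (fIdxC a cap n) := a_pos h1 hmono hspec.1
      rw [greedyIdxCap_unfold h1 hmono hcap h0]
      intro i hi
      rcases List.mem_cons.mp hi with h | h
      · subst h; exact ⟨hspec.1, hspec.2.1⟩
      · exact ih _ (by omega) i h

end Basics


noncomputable def Tsum (a : ℕ → ℕ) (θ : ℝ) (N : ℕ) : ℂ :=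
  ∑ n ∈ Finset.range N, expCirc (θ * (greedyDigitSum a n : ℝ))

noncomputable def Wsum (a : ℕ → ℕ) (θ : ℝ) : List ℕ → ℂ
  | [] => 0
  | i :: l => Tsum a θ (a i) + expCirc θ * Wsum a θ l

lemma expCirc_add (x y : ℝ) : expCirc (x + y) = expCirc x * expCirc y := by
  rw [expCirc, expCirc, expCirc, ← Complex.exp_add]
  congr 1
  push_cast
  ring

lemma norm_expCirc (x : ℝ) : ‖expCirc x‖ = 1 := by
  rw [expCirc]
  have h : (2 * (Real.pi : ℂ) * Complex.I * (x : ℝ)) = ((2 * Real.pi * x : ℝ) : ℂ) * Complex.I := by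
    push_cast; ring
  rw [h, Complex.norm_exp_ofReal_mul_I]

section Rec

variable {a : ℕ → ℕ} (h1 : a 1 = 1) (hmono : ∀ n, 1 ≤ n → a n < a (n + 1))

include h1 hmono in
lemma fIdx_inner {N n : ℕ} (hn : a (fIdx a N) ≤ n) (hnN : n < N) : fIdx a n = fIdx a N := by
  have hN1 : 1 ≤ N := by omega
  obtain ⟨hi1, hiN⟩ := fIdx_spec h1 (N := N) hN1
  have hn1 : 1 ≤ n := le_trans (a_pos h1 hmono hi1) hn
  apply le_antisymm
  · by_contra hcon
    push_neg at hcon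
    have hm := fIdx_spec h1 (N := n) hn1
    have hman : fIdx a n ≤ a (fIdx a n) := le_a_self h1 hmono hm.1
    have : ¬ (1 ≤ fIdx a n ∧ a (fIdx a n) ≤ N) :=
      Nat.findGreatest_is_greatest hcon (by omega)
    exact this ⟨hm.1, by omega⟩
  · exact Nat.le_findGreatest (le_trans (le_a_self h1 hmono hi1) hn) ⟨hi1, hn⟩

include h1 hmono in
lemma fIdx_inner_cap {cap N n : ℕ} (hcap : 1 ≤ cap) (hNle : N ≤ a (cap + 1))
    (hn : a (fIdxC a cap N) ≤ n) (hnN : n < N) : fIdx a n = fIdxC a cap N := by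
  have hN1 : 1 ≤ N := by omega
  obtain ⟨hi1, hicap, hiN⟩ := fIdxC_spec h1 (cap := cap) (N := N) hcap hN1
  have hn1 : 1 ≤ n := le_trans (a_pos h1 hmono hi1) hn
  apply le_antisymm
  · by_contra hcon
    push_neg at hcon
    have hm := fIdx_spec h1 (N := n) hn1
    set m := fIdx a n with hmdef
    have hman : m ≤ a m := le_a_self h1 hmono hm.1
    have hmcap : m ≤ cap := by
      by_contra hmc
      push_neg at hmc
      have : a (cap + 1) ≤ a m := a_mono hmono (by omega) (by omega)
      omega
    have : ¬ (1 ≤ m ∧ m ≤ cap ∧ a m ≤ N) :=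
      Nat.findGreatest_is_greatest hcon (by omega)
    exact this ⟨hm.1, hmcap, by omega⟩
  · exact Nat.le_findGreatest (le_trans (le_a_self h1 hmono hi1) hn) ⟨hi1, hn⟩

include h1 hmono in
lemma Tsum_rec (θ : ℝ) {N i : ℕ} (hi1 : 1 ≤ i) (hai : a i ≤ N)
    (hid : ∀ n, a i ≤ n → n < N → fIdx a n = i) :
    Tsum a θ N = Tsum a θ (a i) + expCirc θ * Tsum a θ (N - a i) := by
  have key : ∀ n, a i ≤ n → n < N →
      greedyDigitSum a n = greedyDigitSum a (n - a i) + 1 := by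
    intro n hn hnN
    have h1n : 1 ≤ n := le_trans (a_pos h1 hmono hi1) hn
    rw [greedyDigitSum, greedyIdx_unfold h1 hmono h1n, hid n hn hnN, List.length_cons]
    rfl
  unfold Tsum
  rw [Finset.range_eq_Ico, ← Finset.sum_Ico_consecutive _ (Nat.zero_le (a i)) hai]
  have h2 : ∑ n ∈ Finset.Ico (a i) N, expCirc (θ * (greedyDigitSum a n : ℝ))
      = expCirc θ * ∑ n ∈ Finset.Ico 0 (N - a i), expCirc (θ * (greedyDigitSum a n : ℝ)) := by
    rw [Finset.sum_Ico_eq_sum_range, Nat.Ico_zero_eq_range, Finset.mul_sum]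
    apply Finset.sum_congr rfl
    intro k hk
    rw [Finset.mem_range] at hk
    have hkey := key (a i + k) (by omega) (by omega)
    have hsub : a i + k - a i = k := by omega
    rw [hsub] at hkey
    rw [hkey]
    push_cast
    rw [mul_add, mul_one, expCirc_add, mul_comm]
  rw [h2]
  simp only [Finset.range_eq_Ico]

include h1 hmono in
lemma Tsum_eq_Wsum (θ : ℝ) {cap : ℕ} (hcap : 1 ≤ cap) :
    ∀ N, N ≤ a (cap + 1) → Tsum a θ N = Wsum a θ (greedyIdxCap a cap N) := by
  intro N
  induction N using Nat.strong_induction_on with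
  | _ N ih =>
    intro hNle
    rcases Nat.eq_zero_or_pos N with h0 | h0
    · subst h0
      show Tsum a θ 0 = Wsum a θ []
      simp [Tsum, Wsum]
    · obtain ⟨hi1, hicap, hiN⟩ := fIdxC_spec h1 (cap := cap) (N := N) hcap h0
      have hge1 : 1 ≤ a (fIdxC a cap N) := a_pos h1 hmono hi1
      rw [greedyIdxCap_unfold h1 hmono hcap h0]
      show _ = Tsum a θ (a (fIdxC a cap N)) + expCirc θ * Wsum a θ _
      rw [Tsum_rec h1 hmono θ hi1 hiN (fun n hn hnN => fIdx_inner_cap h1 hmono hcap hNle hn hnN),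
        ih (N - a (fIdxC a cap N)) (by omega) (by omega)]

include h1 hmono in
lemma Tsum_rec_free (θ : ℝ) {N : ℕ} (hN : 1 ≤ N) :
    Tsum a θ N = Tsum a θ (a (fIdx a N)) + expCirc θ * Tsum a θ (N - a (fIdx a N)) := by
  obtain ⟨hi1, hiN⟩ := fIdx_spec h1 (N := N) hN
  exact Tsum_rec h1 hmono θ hi1 hiN (fun n hn hnN => fIdx_inner h1 hmono hn hnN)

end Rec

lemma norm_Tsum_le (a : ℕ → ℕ) (θ : ℝ) (N : ℕ) : ‖Tsum a θ N‖ ≤ N := by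
  refine le_trans (norm_sum_le _ _) ?_
  have : ∀ n ∈ Finset.range N, ‖expCirc (θ * (greedyDigitSum a n : ℝ))‖ = 1 := by
    intro n _; exact norm_expCirc _
  rw [Finset.sum_congr rfl this]
  simp

lemma norm_Wsum_le_of (a : ℕ → ℕ) (θ : ℝ) (B : ℝ) :
    ∀ l : List ℕ, (∀ i ∈ l, ‖Tsum a θ (a i)‖ ≤ B * a i) →
    ‖Wsum a θ l‖ ≤ B * (((l.map a).sum : ℕ) : ℝ) := by
  intro l
  induction l with
  | nil => intro _; simp [Wsum]
  | cons i l ihl =>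
    intro hb
    have h1 : ‖Tsum a θ (a i)‖ ≤ B * a i := hb i List.mem_cons_self
    have h2 : ‖Wsum a θ l‖ ≤ B * (((l.map a).sum : ℕ) : ℝ) :=
      ihl (fun j hj => hb j (List.mem_cons_of_mem i hj))
    show ‖Tsum a θ (a i) + expCirc θ * Wsum a θ l‖ ≤ _
    refine le_trans (norm_add_le _ _) ?_
    rw [norm_mul, norm_expCirc, one_mul]
    push_cast [List.map_cons, List.sum_cons]
    push_cast at h2
    linarith


lemma normSq_eq_norm_sq (z : ℂ) : Complex.normSq z = ‖z‖ ^ 2 := by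
  rw [← Complex.sq_norm]

lemma unit_close (x y : ℂ) (hx : ‖x‖ = 1) (hy : ‖y‖ = 1) (δ : ℝ)
    (h : 1 - δ ≤ (x * (starRingEnd ℂ) y).re) : ‖x - y‖ ≤ Real.sqrt (2 * δ) := by
  have h2 : ‖x - y‖ ^ 2 ≤ 2 * δ := by
    have hns := Complex.normSq_sub x y
    rw [normSq_eq_norm_sq, normSq_eq_norm_sq, normSq_eq_norm_sq, hx, hy] at hns
    rw [hns]; nlinarith
  calc ‖x - y‖ = Real.sqrt (‖x - y‖ ^ 2) := (Real.sqrt_sq (norm_nonneg _)).symm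
    _ ≤ Real.sqrt (2 * δ) := Real.sqrt_le_sqrt h2

lemma align (ζ R : ℂ) (slack : ℝ) (hs : 0 ≤ slack) (hζ : 0 < ‖ζ‖) (hZ : 0 < ‖ζ + R‖)
    (h : ‖ζ‖ + ‖R‖ ≤ ‖ζ + R‖ + slack) :
    ‖ζ / (‖ζ‖ : ℂ) - (ζ + R) / (‖ζ + R‖ : ℂ)‖ ≤ Real.sqrt (2 * (slack / ‖ζ‖)) := by
  set Z := ζ + R with hZdef
  set c := ‖ζ‖ with hc
  set d := ‖Z‖ with hd
  have hcne : (c : ℝ) ≠ 0 := ne_of_gt hζ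
  have hdne : (d : ℝ) ≠ 0 := ne_of_gt hZ
  -- p ≥ (c - slack) * d
  have hp : (c - slack) * d ≤ (ζ * (starRingEnd ℂ) Z).re := by
    have e1 : ζ * (starRingEnd ℂ) Z = Z * (starRingEnd ℂ) Z - R * (starRingEnd ℂ) Z := by
      rw [hZdef]; ring
    have e2 : (Z * (starRingEnd ℂ) Z).re = d ^ 2 := by
      rw [Complex.mul_conj, Complex.ofReal_re, normSq_eq_norm_sq]
    have e3 : (R * (starRingEnd ℂ) Z).re ≤ ‖R‖ * d := by
      refine le_trans (Complex.re_le_norm _) ?_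
      rw [norm_mul, Complex.norm_conj]
    have e4 : (ζ * (starRingEnd ℂ) Z).re = d ^ 2 - (R * (starRingEnd ℂ) Z).re := by
      rw [e1, Complex.sub_re, e2]
    nlinarith [hZ.le, norm_nonneg R]
  -- unit vectors
  have hxu : ‖ζ / (c : ℂ)‖ = 1 := by
    rw [norm_div, Complex.norm_real, Real.norm_eq_abs, abs_of_pos hζ, ← hc, div_self hcne]
  have hyu : ‖Z / (d : ℂ)‖ = 1 := by
    rw [norm_div, Complex.norm_real, Real.norm_eq_abs, abs_of_pos hZ, ← hd, div_self hdne]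
  refine unit_close _ _ hxu hyu _ ?_
  have e5 : (ζ / (c : ℂ)) * (starRingEnd ℂ) (Z / (d : ℂ))
      = ((1 / (c * d) : ℝ) : ℂ) * (ζ * (starRingEnd ℂ) Z) := by
    rw [map_div₀, Complex.conj_ofReal]
    push_cast
    field_simp
  rw [e5, Complex.re_ofReal_mul]
  have e6 : 1 - slack / c = ((c - slack) * d) / (c * d) := by field_simp
  rw [e6]
  calc ((c - slack) * d) / (c * d) ≤ (ζ * (starRingEnd ℂ) Z).re / (c * d) := by
        gcongr
    _ = 1 / (c * d) * (ζ * (starRingEnd ℂ) Z).re := by ring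

noncomputable def vF (a : ℕ → ℕ) (θ : ℝ) (k : ℕ) : ℝ := ‖Tsum a θ (a k)‖ / ((a k : ℕ) : ℝ)

noncomputable def wF (a : ℕ → ℕ) (θ : ℝ) (L k : ℕ) : ℝ :=
  (Finset.Icc k (k + L)).sup' ⟨k, Finset.mem_Icc.mpr ⟨le_rfl, Nat.le_add_right _ _⟩⟩ (vF a θ)

section StepB

variable {a : ℕ → ℕ} (h1 : a 1 = 1) (hmono : ∀ n, 1 ≤ n → a n < a (n + 1))
  {L : ℕ} (hL : 1 ≤ L)
  (hsig : ∀ n, 2 ≤ n → ∀ i ∈ greedyIdxCap a (n - 1) (a n), n ≤ i + L)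

include h1 hmono hL hsig in
lemma exp_structure : ∀ n, 2 ≤ n → ∃ i2 t, greedyIdxCap a (n - 1) (a n) = (n - 1) :: i2 :: t ∧
    (∀ i ∈ (n - 1) :: i2 :: t, 1 ≤ i ∧ i ≤ n - 1 ∧ n ≤ i + L) ∧
    a (n - 1) + (a i2 + ((t.map a).sum)) = a n := by
  intro n hn
  have hcap : 1 ≤ n - 1 := by omega
  have hId : n - 1 + 1 = n := by omega
  have h0 : 1 ≤ a n := a_pos h1 hmono (by omega)
  have hstrict : a (n - 1) < a n := by
    have := a_strict hmono hcap (by omega : n - 1 < n); exact this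
  have hi1 : fIdxC a (n - 1) (a n) = n - 1 := by
    have hspec := fIdxC_spec h1 (cap := n - 1) (N := a n) hcap h0
    apply le_antisymm hspec.2.1
    apply Nat.le_findGreatest
    · exact le_trans (le_a_self h1 hmono hcap) (le_of_lt hstrict)
    · exact ⟨hcap, le_rfl, le_of_lt hstrict⟩
  have hrem : 1 ≤ a n - a (n - 1) := by omega
  have hunf := greedyIdxCap_unfold h1 hmono (cap := n - 1) (n := a n) hcap h0
  rw [hi1] at hunf
  have hunf2 := greedyIdxCap_unfold h1 hmono (cap := n - 1) (n := a n - a (n - 1)) hcap hrem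
  set i2 := fIdxC a (n - 1) (a n - a (n - 1)) with hi2def
  set t := greedyIdxCap a (n - 1) ((a n - a (n - 1)) - a i2) with htdef
  have hl : greedyIdxCap a (n - 1) (a n) = (n - 1) :: i2 :: t := by rw [hunf, hunf2]
  refine ⟨i2, t, hl, ?_, ?_⟩
  · intro i hi
    rw [← hl] at hi
    obtain ⟨hia, hib⟩ := greedyIdxCap_mem h1 hmono hcap (a n) i hi
    exact ⟨hia, hib, hsig n hn i hi⟩
  · have hsum := greedyIdxCap_sum h1 hmono hcap (a n)
    rw [hl] at hsum
    simp only [List.map_cons, List.sum_cons] at hsum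
    omega

include h1 hmono hL hsig in
lemma u_expansion (θ : ℝ) : ∀ n, 2 ≤ n → ∃ i2 t,
    Tsum a θ (a n) = Tsum a θ (a (n - 1)) +
      expCirc θ * (Tsum a θ (a i2) + expCirc θ * Wsum a θ t) ∧
    (∀ i ∈ (n - 1) :: i2 :: t, 1 ≤ i ∧ i ≤ n - 1 ∧ n ≤ i + L) ∧
    a (n - 1) + (a i2 + ((t.map a).sum)) = a n := by
  intro n hn
  obtain ⟨i2, t, hl, hmem, hsum⟩ := exp_structure h1 hmono hL hsig n hn
  refine ⟨i2, t, ?_, hmem, hsum⟩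
  have hId : n - 1 + 1 = n := by omega
  have haan : a n ≤ a (n - 1 + 1) := by rw [hId]
  have hTW := Tsum_eq_Wsum h1 hmono θ (cap := n - 1) (by omega) (a n) haan
  rw [hl] at hTW
  exact hTW

include h1 hmono hL hsig in
lemma step_bound (θ : ℝ) : ∀ n, 2 ≤ n → ∀ B : ℝ,
    (∀ i, 1 ≤ i → n ≤ i + L → i + 1 ≤ n → vF a θ i ≤ B) → vF a θ n ≤ B := by
  intro n hn B hB
  have hId : n - 1 + 1 = n := by omega
  have haan : a n ≤ a (n - 1 + 1) := by rw [hId]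
  have hTW := Tsum_eq_Wsum h1 hmono θ (cap := n - 1) (by omega) (a n) haan
  have hmass := greedyIdxCap_sum h1 hmono (cap := n - 1) (by omega) (a n)
  have hWb := norm_Wsum_le_of a θ B (greedyIdxCap a (n - 1) (a n)) ?_
  · rw [hmass] at hWb
    rw [← hTW] at hWb
    have hApos : (0 : ℝ) < (a n : ℝ) := by
      have := a_pos h1 hmono (show 1 ≤ n by omega); exact_mod_cast this
    rw [vF, div_le_iff₀ hApos]
    exact hWb
  · intro i hi
    obtain ⟨hi1, hi2⟩ := greedyIdxCap_mem h1 hmono (by omega) (a n) i hi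
    have hiL := hsig n hn i hi
    have hv := hB i hi1 hiL (by omega)
    have hAipos : (0 : ℝ) < (a i : ℝ) := by
      have := a_pos h1 hmono hi1; exact_mod_cast this
    rw [vF, div_le_iff₀ hAipos] at hv
    exact hv

include h1 hmono hL hsig in
lemma wF_antitone (θ : ℝ) : Antitone (wF a θ L) := by
  apply antitone_nat_of_succ_le
  intro k
  apply Finset.sup'_le
  intro j hj
  rw [Finset.mem_Icc] at hj
  rcases Nat.lt_or_ge j (k + L + 1) with h | h
  · exact Finset.le_sup' (vF a θ) (Finset.mem_Icc.mpr ⟨by omega, by omega⟩)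
  · have hj' : j = k + L + 1 := by omega
    subst hj'
    apply step_bound h1 hmono hL hsig θ _ (by omega)
    intro i hi1 hiL hile
    exact Finset.le_sup' (vF a θ) (Finset.mem_Icc.mpr ⟨by omega, by omega⟩)

include h1 hmono in
lemma vF_nonneg (θ : ℝ) (k : ℕ) : 0 ≤ vF a θ k := by
  apply div_nonneg (norm_nonneg _)
  positivity

include h1 hmono hL in
lemma vF_le_wF (θ : ℝ) (k : ℕ) : vF a θ k ≤ wF a θ L k :=
  Finset.le_sup' (vF a θ) (Finset.mem_Icc.mpr ⟨le_rfl, Nat.le_add_right _ _⟩)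

include h1 hmono hL in
lemma wF_nonneg (θ : ℝ) (k : ℕ) : 0 ≤ wF a θ L k :=
  le_trans (vF_nonneg h1 hmono θ k) (vF_le_wF h1 hmono hL θ k)

end StepB

lemma div_bound_helper {slack nrm E ε c A : ℝ} (hc : 0 < c) (hA : 0 < A)
    (hE : 0 < E) (hε : 0 < ε)
    (hsl : slack ≤ E * ε * A) (hnl : c / 2 * A ≤ nrm) (hnp : 0 < nrm) :
    2 * (slack / nrm) ≤ 4 * E * ε / c := by
  have h1 : slack / nrm ≤ (E * ε * A) / (c / 2 * A) := by
    apply div_le_div₀ (by positivity) hsl (by positivity) hnl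
  have h2 : (E * ε * A) / (c / 2 * A) = 2 * E * ε / c := by
    field_simp
  rw [h2] at h1
  calc 2 * (slack / nrm) ≤ 2 * (2 * E * ε / c) := by linarith
    _ = 4 * E * ε / c := by ring

lemma norm_dir_eq_one {u : ℂ} (hu : 0 < ‖u‖) : ‖u / (‖u‖ : ℂ)‖ = 1 := by
  rw [norm_div, Complex.norm_real, Real.norm_eq_abs, abs_of_pos hu, div_self (ne_of_gt hu)]

lemma helper_pos {x A c e : ℝ} (hA : 0 < A) (hc : 0 < c) (he : e ≤ c/2)
    (hlow : (c - e) * A ≤ x) : 0 < x := by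
  nlinarith

lemma helper_half {x A c e : ℝ} (hA : 0 ≤ A) (he : e ≤ c/2)
    (hlow : (c - e) * A ≤ x) : c/2 * A ≤ x := by
  nlinarith

lemma helper_zlow {c ε ep ep1 S An An1 nZ nR nζ : ℝ}
    (h1 : nZ - nR ≤ nζ) (hZ : (c - ep) * An ≤ nZ) (hR : nR ≤ (c + ε) * (An - An1))
    (hAS : An ≤ S * An1) (hrec : S * (ε + ep) ≤ ep1) (hA1 : 0 ≤ An1)
    (hε : 0 ≤ ε) (hep : 0 ≤ ep) :
    (c - ep1) * An1 ≤ nζ := by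
  nlinarith [mul_le_mul_of_nonneg_left hAS (by linarith : (0:ℝ) ≤ ε + ep),
    mul_le_mul_of_nonneg_right hrec hA1]

lemma helper_slack {ε ep ep1 E S An An1 : ℝ}
    (hAS : An ≤ S * An1) (hrec : S * (ε + ep) ≤ ep1) (hE : ep1 ≤ E * ε)
    (hA1 : 0 ≤ An1) (hε : 0 ≤ ε) (hep : 0 ≤ ep) :
    (ε + ep) * An ≤ E * ε * An1 := by
  nlinarith [mul_le_mul_of_nonneg_left hAS (by linarith : (0:ℝ) ≤ ε + ep),
    mul_le_mul_of_nonneg_right hrec hA1, mul_le_mul_of_nonneg_right hE hA1]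


lemma key_tendsto {a : ℕ → ℕ} (h1 : a 1 = 1) (hmono : ∀ n, 1 ≤ n → a n < a (n + 1))
    {L : ℕ} (hL : 1 ≤ L)
    (hsig : ∀ n, 2 ≤ n → ∀ i ∈ greedyIdxCap a (n - 1) (a n), n ≤ i + L)
    {s : ℝ} (hs1 : 1 < s) (hgrow : ∀ n, 1 ≤ n → (a (n + 1) : ℝ) < s * (a n : ℝ))
    (θ : ℝ) (hzne : expCirc θ ≠ 1) :
    Filter.Tendsto (vF a θ) Filter.atTop (nhds 0) := by
  have hs0 : (0 : ℝ) < s := by linarith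
  have hApos : ∀ k, 1 ≤ k → (0 : ℝ) < (a k : ℝ) := by
    intro k hk; exact_mod_cast a_pos h1 hmono hk
  have hAgrow : ∀ m p, 1 ≤ m → (a (m + p) : ℝ) ≤ s ^ p * (a m : ℝ) := by
    intro m p hm
    induction p with
    | zero => simp
    | succ p ih =>
      have h' := hgrow (m + p) (by omega)
      calc (a (m + p + 1) : ℝ) ≤ s * (a (m + p) : ℝ) := le_of_lt h'
        _ ≤ s * (s ^ p * (a m : ℝ)) := by
            apply mul_le_mul_of_nonneg_left ih hs0.le
        _ = s ^ (p + 1) * (a m : ℝ) := by ring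
  set S : ℝ := s ^ L with hSdef
  have hS1 : (1 : ℝ) ≤ S := one_le_pow₀ hs1.le
  have hAS : ∀ i j, 1 ≤ i → i ≤ j → j ≤ i + L → (a j : ℝ) ≤ S * (a i : ℝ) := by
    intro i j hi hij hijL
    have h' := hAgrow i (j - i) hi
    have hrw : i + (j - i) = j := by omega
    rw [hrw] at h'
    calc (a j : ℝ) ≤ s ^ (j - i) * (a i : ℝ) := h'
      _ ≤ S * (a i : ℝ) := by
          apply mul_le_mul_of_nonneg_right _ (hApos i hi).le
          exact pow_le_pow_right₀ hs1.le (by omega)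
  clear_value S
  -- window max and its limit
  have hanti : Antitone (wF a θ L) := wF_antitone h1 hmono hL hsig θ
  have hbdd : BddBelow (Set.range (wF a θ L)) := by
    refine ⟨0, ?_⟩
    rintro x ⟨k, rfl⟩
    exact wF_nonneg h1 hmono hL θ k
  have hco := tendsto_atTop_ciInf hanti hbdd
  set c : ℝ := ⨅ k, wF a θ L k with hcdef
  have hcle : ∀ k, c ≤ wF a θ L k := fun k => ciInf_le hbdd k
  have hc0 : 0 ≤ c := le_ciInf (fun k => wF_nonneg h1 hmono hL θ k)
  clear_value c
  have hczero : c = 0 := by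
    by_contra hcne
    have hcpos : 0 < c := lt_of_le_of_ne hc0 (Ne.symm hcne)
    set z : ℂ := expCirc θ with hzdef
    have hδ : 0 < ‖z - 1‖ := by
      rw [norm_pos_iff, sub_ne_zero]; exact hzne
    set δ : ℝ := ‖z - 1‖ with hδdef
    set E : ℝ := (S + 1) ^ (L + 2) with hEdef
    have hEpos : 0 < E := by positivity
    set ε : ℝ := min (c / (2 * E)) (c * δ ^ 2 / (8 * E * ((L : ℝ) + 1) ^ 2)) with hεdef
    have hεpos : 0 < ε := lt_min (by positivity) (by positivity)
    have hP1 : E * ε ≤ c / 2 := by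
      have h' : ε ≤ c / (2 * E) := min_le_left _ _
      calc E * ε ≤ E * (c / (2 * E)) := mul_le_mul_of_nonneg_left h' hEpos.le
        _ = c / 2 := by field_simp
    set εsf : ℕ → ℝ := fun p => (S + 1) ^ (p + 1) * ε with hεsfdef
    have hεs_pos : ∀ p, 0 < εsf p := by intro p; positivity
    have hεs_le : ∀ p, p ≤ L + 1 → εsf p ≤ c / 2 := by
      intro p hp
      have h' : (S + 1) ^ (p + 1) ≤ (S + 1) ^ (L + 2) :=
        pow_le_pow_right₀ (by linarith) (by omega)
      calc εsf p ≤ (S + 1) ^ (L + 2) * ε := mul_le_mul_of_nonneg_right h' hεpos.le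
        _ ≤ c / 2 := hP1
    have hεs_E : ∀ p, p ≤ L + 1 → εsf p ≤ E * ε := by
      intro p hp
      have h' : (S + 1) ^ (p + 1) ≤ (S + 1) ^ (L + 2) :=
        pow_le_pow_right₀ (by linarith) (by omega)
      exact mul_le_mul_of_nonneg_right h' hεpos.le
    have hεs_rec : ∀ p, S * (ε + εsf p) ≤ εsf (p + 1) := by
      intro p
      show S * (ε + (S + 1) ^ (p + 1) * ε) ≤ (S + 1) ^ (p + 1 + 1) * ε
      have hpow : S ≤ (S + 1) ^ (p + 1) := by
        calc S ≤ S + 1 := by linarith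
          _ ≤ (S + 1) ^ (p + 1) := le_self_pow₀ (by linarith) (by omega)
      have hP : (1 : ℝ) ≤ (S + 1) ^ (p + 1) := one_le_pow₀ (by linarith)
      have hrw : (S + 1) ^ (p + 1 + 1) = (S + 1) * (S + 1) ^ (p + 1) := by ring
      rw [hrw]
      nlinarith [hεpos.le]
    set η : ℝ := Real.sqrt (4 * E * ε / c) with hηdef
    have hη0 : 0 ≤ η := Real.sqrt_nonneg _
    have hηδ : ((L : ℝ) + 1) * η < δ := by
      have hεr : ε ≤ c * δ ^ 2 / (8 * E * ((L : ℝ) + 1) ^ 2) := min_le_right _ _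
      have hq : 4 * E * ε / c ≤ δ ^ 2 / (2 * ((L : ℝ) + 1) ^ 2) := by
        rw [div_le_div_iff₀ hcpos (by positivity)]
        have hεr' : ε * (8 * E * ((L : ℝ) + 1) ^ 2) ≤ c * δ ^ 2 :=
          (le_div_iff₀ (by positivity)).mp hεr
        nlinarith [hεr']
      have h2 : (((L : ℝ) + 1) * η) ^ 2 ≤ δ ^ 2 / 2 := by
        rw [mul_pow, hηdef, Real.sq_sqrt (by positivity)]
        calc ((L : ℝ) + 1) ^ 2 * (4 * E * ε / c)
            ≤ ((L : ℝ) + 1) ^ 2 * (δ ^ 2 / (2 * ((L : ℝ) + 1) ^ 2)) :=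
              mul_le_mul_of_nonneg_left hq (by positivity)
          _ = δ ^ 2 / 2 := by field_simp
      have h3 : (((L : ℝ) + 1) * η) ^ 2 < δ ^ 2 := by nlinarith [hδ]
      exact lt_of_pow_lt_pow_left₀ 2 hδ.le h3
    clear_value E ε εsf η δ
    -- choose K
    have hev : ∀ᶠ k in Filter.atTop, wF a θ L k < c + ε :=
      (tendsto_order.1 hco).2 (c + ε) (by linarith)
    obtain ⟨K, hKall⟩ := Filter.eventually_atTop.1 hev
    have hvle : ∀ i, K ≤ i → vF a θ i ≤ c + ε := by
      intro i hi
      exact le_trans (vF_le_wF h1 hmono hL θ i) (le_of_lt (hKall i hi))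
    have hnormle : ∀ i, 1 ≤ i → K ≤ i → ‖Tsum a θ (a i)‖ ≤ (c + ε) * (a i : ℝ) := by
      intro i hi1 hiK
      have h' := hvle i hiK
      rw [vF, div_le_iff₀ (hApos i hi1)] at h'
      exact h'
    -- choose j attaining the window max
    obtain ⟨j, hjmem, hjw⟩ := Finset.exists_mem_eq_sup'
      (⟨K + 2*L + 2, Finset.mem_Icc.mpr ⟨le_rfl, Nat.le_add_right _ _⟩⟩ :
        (Finset.Icc (K + 2*L + 2) (K + 2*L + 2 + L)).Nonempty) (vF a θ)
    have hwj : wF a θ L (K + 2*L + 2) = vF a θ j := hjw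
    have hvj : c ≤ vF a θ j := hwj ▸ hcle (K + 2*L + 2)
    rw [Finset.mem_Icc] at hjmem
    have hjK : K + 2*L + 2 ≤ j := hjmem.1
    -- the chain of aligned directions
    have chain : ∀ p, p ≤ L → (c - εsf p ≤ vF a θ (j - p)) ∧
        ‖Tsum a θ (a (j - p)) / ((‖Tsum a θ (a (j - p))‖ : ℝ) : ℂ)
          - Tsum a θ (a j) / ((‖Tsum a θ (a j)‖ : ℝ) : ℂ)‖ ≤ (p : ℝ) * η := by
      intro p
      induction p with
      | zero =>
        intro _
        constructor
        · have h' := hεs_pos 0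
          simp only [Nat.sub_zero]
          linarith
        · simp
      | succ p ih =>
        intro hpL
        obtain ⟨ihv, ihd⟩ := ih (by omega)
        set n := j - p with hndef
        have hn2 : 2 ≤ n := by omega
        have hnK : K + L + 2 ≤ n := by omega
        obtain ⟨i2, t, hexp, hmem, hsum⟩ := u_expansion h1 hmono hL hsig θ n hn2
        have hsumR : (a i2 : ℝ) + (((t.map a).sum : ℕ) : ℝ) = (a n : ℝ) - (a (n-1) : ℝ) := by
          have hc' : ((a (n-1)) : ℝ) + ((a i2 : ℝ) + (((t.map a).sum : ℕ) : ℝ)) = (a n : ℝ) := by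
            exact_mod_cast hsum
          linarith
        have hWt : ‖Wsum a θ t‖ ≤ (c + ε) * (((t.map a).sum : ℕ) : ℝ) := by
          apply norm_Wsum_le_of a θ (c + ε) t
          intro i hi
          have hm := hmem i (List.mem_cons_of_mem _ (List.mem_cons_of_mem _ hi))
          exact hnormle i hm.1 (by omega)
        have hi2m := hmem i2 (List.mem_cons_of_mem _ List.mem_cons_self)
        have hui2 : ‖Tsum a θ (a i2)‖ ≤ (c + ε) * (a i2 : ℝ) := hnormle i2 hi2m.1 (by omega)
        have hun1 : ‖Tsum a θ (a (n-1))‖ ≤ (c + ε) * (a (n-1) : ℝ) :=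
          hnormle (n-1) (by omega) (by omega)
        set Rt := expCirc θ * (Tsum a θ (a i2) + expCirc θ * Wsum a θ t) with hRtdef
        have hZeq : Tsum a θ (a n) = Tsum a θ (a (n-1)) + Rt := hexp
        have hRb : ‖Rt‖ ≤ (c + ε) * ((a n : ℝ) - (a (n-1) : ℝ)) := by
          rw [hRtdef, norm_mul, norm_expCirc, one_mul]
          calc ‖Tsum a θ (a i2) + expCirc θ * Wsum a θ t‖
              ≤ ‖Tsum a θ (a i2)‖ + ‖expCirc θ * Wsum a θ t‖ := norm_add_le _ _
            _ = ‖Tsum a θ (a i2)‖ + ‖Wsum a θ t‖ := by rw [norm_mul, norm_expCirc, one_mul]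
            _ ≤ (c + ε) * (a i2 : ℝ) + (c + ε) * (((t.map a).sum : ℕ) : ℝ) := add_le_add hui2 hWt
            _ = (c + ε) * ((a i2 : ℝ) + (((t.map a).sum : ℕ) : ℝ)) := by ring
            _ = (c + ε) * ((a n : ℝ) - (a (n-1) : ℝ)) := by rw [hsumR]
        have hposn1 : (0:ℝ) < (a (n-1) : ℝ) := hApos _ (by omega)
        have hposn : (0:ℝ) < (a n : ℝ) := hApos _ (by omega)
        have hASn : (a n : ℝ) ≤ S * (a (n-1) : ℝ) := hAS (n-1) n (by omega) (by omega) (by omega)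
        have hZlow : (c - εsf p) * (a n : ℝ) ≤ ‖Tsum a θ (a n)‖ := by
          rw [vF, le_div_iff₀ hposn] at ihv
          exact ihv
        have hZpos : (0:ℝ) < ‖Tsum a θ (a n)‖ :=
          helper_pos hposn hcpos (hεs_le p (by omega)) hZlow
        have htri : ‖Tsum a θ (a (n-1))‖ + ‖Rt‖
            ≤ ‖Tsum a θ (a (n-1)) + Rt‖ + (ε + εsf p) * (a n : ℝ) := by
          rw [← hZeq]
          linarith
        have hns : ‖Tsum a θ (a n)‖ - ‖Rt‖ ≤ ‖Tsum a θ (a (n-1))‖ := by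
          rw [hZeq]
          linarith [norm_add_le (Tsum a θ (a (n-1))) Rt]
        have t1 : (ε + εsf p) * (a n : ℝ) ≤ (ε + εsf p) * (S * (a (n-1) : ℝ)) := by
          apply mul_le_mul_of_nonneg_left hASn
          have := hεs_pos p
          linarith
        have t2 : S * (ε + εsf p) * (a (n-1) : ℝ) ≤ εsf (p+1) * (a (n-1) : ℝ) :=
          mul_le_mul_of_nonneg_right (hεs_rec p) hposn1.le
        have hζlow : (c - εsf (p+1)) * (a (n-1) : ℝ) ≤ ‖Tsum a θ (a (n-1))‖ :=
          helper_zlow hns hZlow hRb hASn (hεs_rec p) hposn1.le hεpos.le (hεs_pos p).le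
        have hζpos : (0:ℝ) < ‖Tsum a θ (a (n-1))‖ :=
          helper_pos hposn1 hcpos (hεs_le (p+1) (by omega)) hζlow
        have hslack0 : (0:ℝ) ≤ (ε + εsf p) * (a n : ℝ) :=
          mul_nonneg (by have := hεs_pos p; linarith) hposn.le
        have halign := align (Tsum a θ (a (n-1))) Rt ((ε + εsf p) * (a n : ℝ)) hslack0 hζpos
          (by rw [← hZeq]; exact hZpos) htri
        rw [← hZeq] at halign
        have hsl : (ε + εsf p) * (a n : ℝ) ≤ E * ε * (a (n-1) : ℝ) :=
          helper_slack hASn (hεs_rec p) (hεs_E (p+1) (by omega)) hposn1.le hεpos.le (hεs_pos p).le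
        have hnl : c/2 * (a (n-1):ℝ) ≤ ‖Tsum a θ (a (n-1))‖ :=
          helper_half hposn1.le (hεs_le (p+1) (by omega)) hζlow
        have hsq := div_bound_helper hcpos hposn1 hEpos hεpos hsl hnl hζpos
        have hηbd : ‖Tsum a θ (a (n-1)) / ((‖Tsum a θ (a (n-1))‖ : ℝ) : ℂ)
            - Tsum a θ (a n) / ((‖Tsum a θ (a n)‖ : ℝ) : ℂ)‖ ≤ η := by
          refine le_trans halign ?_
          rw [hηdef]
          exact Real.sqrt_le_sqrt hsq
        have hrwn : j - (p+1) = n - 1 := by omega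
        rw [hrwn]
        constructor
        · rw [vF, le_div_iff₀ hposn1]
          exact hζlow
        · have hsplit : Tsum a θ (a (n-1)) / ((‖Tsum a θ (a (n-1))‖ : ℝ) : ℂ)
              - Tsum a θ (a j) / ((‖Tsum a θ (a j)‖ : ℝ) : ℂ)
              = (Tsum a θ (a (n-1)) / ((‖Tsum a θ (a (n-1))‖ : ℝ) : ℂ)
                - Tsum a θ (a n) / ((‖Tsum a θ (a n)‖ : ℝ) : ℂ))
              + (Tsum a θ (a n) / ((‖Tsum a θ (a n)‖ : ℝ) : ℂ)
                - Tsum a θ (a j) / ((‖Tsum a θ (a j)‖ : ℝ) : ℂ)) := by ring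
          rw [hsplit]
          refine le_trans (norm_add_le _ _) ?_
          push_cast
          linarith
    -- the final contradiction using the second digit at j
    obtain ⟨i2, t, hexp, hmem, hsum⟩ := u_expansion h1 hmono hL hsig θ j (by omega)
    have hsumR : (a (j-1) : ℝ) + (((t.map a).sum : ℕ) : ℝ) = (a j : ℝ) - (a i2 : ℝ) := by
      have hc' : ((a (j-1)) : ℝ) + ((a i2 : ℝ) + (((t.map a).sum : ℕ) : ℝ)) = (a j : ℝ) := by
        exact_mod_cast hsum
      linarith
    have hWt : ‖Wsum a θ t‖ ≤ (c + ε) * (((t.map a).sum : ℕ) : ℝ) := by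
      apply norm_Wsum_le_of a θ (c + ε) t
      intro i hi
      have hm := hmem i (List.mem_cons_of_mem _ (List.mem_cons_of_mem _ hi))
      exact hnormle i hm.1 (by omega)
    have hi2m := hmem i2 (List.mem_cons_of_mem _ List.mem_cons_self)
    have hui2 : ‖Tsum a θ (a i2)‖ ≤ (c + ε) * (a i2 : ℝ) := hnormle i2 hi2m.1 (by omega)
    have huj1 : ‖Tsum a θ (a (j-1))‖ ≤ (c + ε) * (a (j-1) : ℝ) :=
      hnormle (j-1) (by omega) (by omega)
    set ζ2 := expCirc θ * Tsum a θ (a i2) with hζ2def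
    set R2 := Tsum a θ (a (j-1)) + (expCirc θ * expCirc θ) * Wsum a θ t with hR2def
    have hZeq2 : Tsum a θ (a j) = ζ2 + R2 := by
      rw [hexp, hζ2def, hR2def]; ring
    have hζ2norm : ‖ζ2‖ = ‖Tsum a θ (a i2)‖ := by
      rw [hζ2def, norm_mul, norm_expCirc, one_mul]
    have hRb2 : ‖R2‖ ≤ (c + ε) * ((a j : ℝ) - (a i2 : ℝ)) := by
      rw [hR2def]
      calc ‖Tsum a θ (a (j-1)) + (expCirc θ * expCirc θ) * Wsum a θ t‖
          ≤ ‖Tsum a θ (a (j-1))‖ + ‖(expCirc θ * expCirc θ) * Wsum a θ t‖ := norm_add_le _ _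
        _ = ‖Tsum a θ (a (j-1))‖ + ‖Wsum a θ t‖ := by
            rw [norm_mul, norm_mul, norm_expCirc, one_mul, one_mul]
        _ ≤ (c + ε) * (a (j-1) : ℝ) + (c + ε) * (((t.map a).sum : ℕ) : ℝ) := add_le_add huj1 hWt
        _ = (c + ε) * ((a (j-1) : ℝ) + (((t.map a).sum : ℕ) : ℝ)) := by ring
        _ = (c + ε) * ((a j : ℝ) - (a i2 : ℝ)) := by rw [hsumR]
    have hposi2 : (0:ℝ) < (a i2 : ℝ) := hApos _ hi2m.1
    have hposj : (0:ℝ) < (a j : ℝ) := hApos _ (by omega)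
    have hASj : (a j : ℝ) ≤ S * (a i2 : ℝ) := hAS i2 j hi2m.1 (by omega) (by omega)
    have hZlow2 : c * (a j : ℝ) ≤ ‖Tsum a θ (a j)‖ := by
      have h' := hvj
      rw [vF, le_div_iff₀ hposj] at h'
      exact h'
    have hZlow2' : (c - εsf 0) * (a j : ℝ) ≤ ‖Tsum a θ (a j)‖ := by
      have h' : (c - εsf 0) * (a j : ℝ) ≤ c * (a j : ℝ) :=
        mul_le_mul_of_nonneg_right (by have := hεs_pos 0; linarith) hposj.le
      linarith
    have hZpos2 : (0:ℝ) < ‖Tsum a θ (a j)‖ :=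
      helper_pos hposj hcpos (hεs_le 0 (by omega)) hZlow2'
    have htri2 : ‖ζ2‖ + ‖R2‖ ≤ ‖ζ2 + R2‖ + (ε + εsf 0) * (a j : ℝ) := by
      rw [← hZeq2, hζ2norm]
      have h0' : (0:ℝ) ≤ εsf 0 * (a j : ℝ) :=
        mul_nonneg (hεs_pos 0).le hposj.le
      linarith
    have hns2 : ‖Tsum a θ (a j)‖ - ‖R2‖ ≤ ‖ζ2‖ := by
      rw [hZeq2]
      linarith [norm_add_le ζ2 R2]
    have t1' : (ε + εsf 0) * (a j : ℝ) ≤ (ε + εsf 0) * (S * (a i2 : ℝ)) := by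
      apply mul_le_mul_of_nonneg_left hASj
      have := hεs_pos 0
      linarith
    have t2' : S * (ε + εsf 0) * (a i2 : ℝ) ≤ εsf 1 * (a i2 : ℝ) :=
      mul_le_mul_of_nonneg_right (hεs_rec 0) hposi2.le
    have hζ2low : (c - εsf 1) * (a i2 : ℝ) ≤ ‖ζ2‖ :=
      helper_zlow hns2 hZlow2' hRb2 hASj (hεs_rec 0) hposi2.le hεpos.le (hεs_pos 0).le
    have hζ2pos : (0:ℝ) < ‖ζ2‖ :=
      helper_pos hposi2 hcpos (hεs_le 1 (by omega)) hζ2low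
    have hslack0' : (0:ℝ) ≤ (ε + εsf 0) * (a j : ℝ) :=
      mul_nonneg (by have := hεs_pos 0; linarith) hposj.le
    have halign2 := align ζ2 R2 ((ε + εsf 0) * (a j : ℝ)) hslack0' hζ2pos
      (by rw [← hZeq2]; exact hZpos2) htri2
    rw [← hZeq2] at halign2
    have hsl2 : (ε + εsf 0) * (a j : ℝ) ≤ E * ε * (a i2 : ℝ) :=
      helper_slack hASj (hεs_rec 0) (hεs_E 1 (by omega)) hposi2.le hεpos.le (hεs_pos 0).le
    have hnl2 : c/2 * (a i2:ℝ) ≤ ‖ζ2‖ :=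
      helper_half hposi2.le (hεs_le 1 (by omega)) hζ2low
    have hsq2 := div_bound_helper hcpos hposi2 hEpos hεpos hsl2 hnl2 hζ2pos
    have hηbd2 : ‖ζ2 / ((‖ζ2‖ : ℝ) : ℂ) - Tsum a θ (a j) / ((‖Tsum a θ (a j)‖ : ℝ) : ℂ)‖ ≤ η := by
      refine le_trans halign2 ?_
      rw [hηdef]
      exact Real.sqrt_le_sqrt hsq2
    have hui2pos : (0:ℝ) < ‖Tsum a θ (a i2)‖ := by rw [← hζ2norm]; exact hζ2pos
    have hdir2 : ζ2 / ((‖ζ2‖ : ℝ) : ℂ)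
        = expCirc θ * (Tsum a θ (a i2) / ((‖Tsum a θ (a i2)‖ : ℝ) : ℂ)) := by
      rw [hζ2norm, hζ2def, mul_div_assoc]
    set p2 := j - i2 with hp2def
    have hp2b : p2 ≤ L := by omega
    have hi2rw : j - p2 = i2 := by omega
    obtain ⟨_, hchain2⟩ := chain p2 hp2b
    rw [hi2rw] at hchain2
    have hdirnorm : ‖Tsum a θ (a i2) / ((‖Tsum a θ (a i2)‖ : ℝ) : ℂ)‖ = 1 :=
      norm_dir_eq_one hui2pos
    have hkey : δ ≤ ((L:ℝ) + 1) * η := by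
      have e1 : (expCirc θ - 1) * (Tsum a θ (a i2) / ((‖Tsum a θ (a i2)‖ : ℝ) : ℂ))
          = (ζ2 / ((‖ζ2‖ : ℝ) : ℂ) - Tsum a θ (a j) / ((‖Tsum a θ (a j)‖ : ℝ) : ℂ))
            + (Tsum a θ (a j) / ((‖Tsum a θ (a j)‖ : ℝ) : ℂ)
              - Tsum a θ (a i2) / ((‖Tsum a θ (a i2)‖ : ℝ) : ℂ)) := by
        rw [hdir2]; ring
      have e2 : ‖(expCirc θ - 1) * (Tsum a θ (a i2) / ((‖Tsum a θ (a i2)‖ : ℝ) : ℂ))‖ = δ := by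
        rw [hδdef, hzdef, norm_mul, hdirnorm, mul_one]
      calc δ = ‖(expCirc θ - 1) * (Tsum a θ (a i2) / ((‖Tsum a θ (a i2)‖ : ℝ) : ℂ))‖ := e2.symm
        _ ≤ ‖ζ2 / ((‖ζ2‖ : ℝ) : ℂ) - Tsum a θ (a j) / ((‖Tsum a θ (a j)‖ : ℝ) : ℂ)‖
            + ‖Tsum a θ (a j) / ((‖Tsum a θ (a j)‖ : ℝ) : ℂ)
              - Tsum a θ (a i2) / ((‖Tsum a θ (a i2)‖ : ℝ) : ℂ)‖ := by
            rw [e1]; exact norm_add_le _ _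
        _ ≤ η + (p2:ℝ) * η := by
            refine add_le_add hηbd2 ?_
            rw [norm_sub_rev]
            exact hchain2
        _ = ((p2:ℝ) + 1) * η := by ring
        _ ≤ ((L:ℝ) + 1) * η := by
            have hc2 : (p2:ℝ) ≤ (L:ℝ) := by exact_mod_cast hp2b
            exact mul_le_mul_of_nonneg_right (by linarith) hη0
    exact absurd hkey (not_le.mpr hηδ)

  rw [hczero] at hco
  exact squeeze_zero (fun k => vF_nonneg h1 hmono θ k) (fun k => vF_le_wF h1 hmono hL θ k) hco

section StepC

variable {a : ℕ → ℕ} (h1 : a 1 = 1) (hmono : ∀ n, 1 ≤ n → a n < a (n + 1))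

include h1 hmono in
lemma global_bound (θ : ℝ) (hv : Filter.Tendsto (vF a θ) Filter.atTop (nhds 0)) :
    Filter.Tendsto (fun N : ℕ => ‖Tsum a θ N‖ / (N : ℝ)) Filter.atTop (nhds 0) := by
  have key : ∀ ε : ℝ, 0 < ε → ∃ C : ℝ, 0 ≤ C ∧ ∀ N : ℕ, ‖Tsum a θ N‖ ≤ ε * N + C := by
    intro ε hε
    obtain ⟨K0, hK0⟩ := Metric.tendsto_atTop.mp hv ε hε
    set K := max K0 1 with hKdef
    have hK1 : 1 ≤ K := le_max_right _ _
    have hvsmall : ∀ k, K ≤ k → ‖Tsum a θ (a k)‖ ≤ ε * (a k : ℝ) := by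
      intro k hk
      have h' := hK0 k (le_trans (le_max_left _ _) hk)
      rw [Real.dist_eq, sub_zero, abs_of_nonneg (vF_nonneg h1 hmono θ k)] at h'
      have hApos : (0:ℝ) < (a k : ℝ) := by
        exact_mod_cast a_pos h1 hmono (le_trans hK1 hk)
      rw [vF, div_lt_iff₀ hApos] at h'
      linarith
    refine ⟨(a K : ℝ) * (a K : ℝ), by positivity, ?_⟩
    intro N
    induction N using Nat.strong_induction_on with
    | _ N ih =>
      rcases Nat.lt_or_ge N (a K) with hN | hN
      · have hb := norm_Tsum_le a θ N
        have haK1 : (1:ℝ) ≤ (a K : ℝ) := by exact_mod_cast a_pos h1 hmono hK1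
        have hNle : (N : ℝ) ≤ (a K : ℝ) := by exact_mod_cast hN.le
        nlinarith [mul_nonneg hε.le (Nat.cast_nonneg (α := ℝ) N)]
      · have hN1 : 1 ≤ N := le_trans (a_pos h1 hmono hK1) hN
        have hiK : K ≤ fIdx a N := by
          apply Nat.le_findGreatest (le_trans (le_a_self h1 hmono hK1) hN) ⟨hK1, hN⟩
        obtain ⟨hi1, hiN⟩ := fIdx_spec h1 (N := N) hN1
        have hai1 : 1 ≤ a (fIdx a N) := a_pos h1 hmono hi1
        have hrec := Tsum_rec_free h1 hmono θ (N := N) hN1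
        have hihyp := ih (N - a (fIdx a N)) (by omega)
        have hsmall := hvsmall (fIdx a N) hiK
        have hcast : ((N - a (fIdx a N) : ℕ) : ℝ) = (N : ℝ) - (a (fIdx a N) : ℝ) := by
          push_cast [Nat.cast_sub hiN]
          ring
        calc ‖Tsum a θ N‖
            ≤ ‖Tsum a θ (a (fIdx a N))‖ + ‖expCirc θ * Tsum a θ (N - a (fIdx a N))‖ := by
              rw [hrec]; exact norm_add_le _ _
          _ = ‖Tsum a θ (a (fIdx a N))‖ + ‖Tsum a θ (N - a (fIdx a N))‖ := by
              rw [norm_mul, norm_expCirc, one_mul]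
          _ ≤ ε * (a (fIdx a N) : ℝ) + (ε * ((N - a (fIdx a N) : ℕ) : ℝ) + (a K : ℝ) * (a K : ℝ)) :=
              add_le_add hsmall hihyp
          _ = ε * N + (a K : ℝ) * (a K : ℝ) := by
              rw [hcast]; ring
  rw [Metric.tendsto_atTop]
  intro ε hε
  obtain ⟨C, hC0, hC⟩ := key (ε/2) (by linarith)
  obtain ⟨N₀, hN₀⟩ := exists_nat_gt (2 * C / ε)
  refine ⟨max N₀ 1, ?_⟩
  intro N hN
  have hN1 : 1 ≤ N := le_trans (le_max_right _ _) hN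
  have hNpos : (0:ℝ) < (N : ℝ) := by exact_mod_cast hN1
  have hNgt : 2 * C / ε < (N : ℝ) := by
    calc 2 * C / ε < (N₀ : ℝ) := hN₀
      _ ≤ (N : ℝ) := by exact_mod_cast le_trans (le_max_left _ _) hN
  have hCN : C < ε / 2 * (N : ℝ) := by
    rw [div_lt_iff₀ hε] at hNgt
    nlinarith
  rw [Real.dist_eq, sub_zero, abs_of_nonneg (by positivity)]
  rw [div_lt_iff₀ hNpos]
  have := hC N
  linarith

end StepC
end GDS

/-- Let `a` be a sequence of mild signature and `s n` the sum of
the digits of `n` written greedily in base `a`.  If `γ` is irrational, then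
`γ · s n` is equidistributed modulo 1: for every nonzero integer `d`,
`(1/N) ∑_{n=0}^{N-1} e (d γ s n) → 0`. -/
theorem greedy_digit_sum_equidistributed
    (a : ℕ → ℕ) (ha : MildSignature a) (γ : ℝ) (hγ : Irrational γ) :
    ∀ d : ℤ, d ≠ 0 →
      Tendsto
        (fun N : ℕ => (N : ℂ)⁻¹ * ∑ n ∈ Finset.range N,
          expCirc ((d : ℝ) * γ * (greedyDigitSum a n : ℝ)))
        atTop (nhds 0) := by
  intro d hd
  set θ : ℝ := (d : ℝ) * γ with hθdef
  have hθirr : Irrational θ := hγ.intCast_mul hd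
  have h1 := ha.a_one
  have hmono := ha.mono
  obtain ⟨L0, hsig0⟩ := ha.signature
  obtain ⟨r, s, hr1, hs1, hgrow⟩ := ha.growth
  set L := max L0 1 with hLdef
  have hL : 1 ≤ L := le_max_right _ _
  have hsig : ∀ n, 2 ≤ n → ∀ i ∈ greedyIdxCap a (n - 1) (a n), n ≤ i + L := by
    intro n hn i hi
    have h' := hsig0 n hn i hi
    have h'' : L0 ≤ L := le_max_left _ _
    omega
  have hgrow' : ∀ n, 1 ≤ n → (a (n + 1) : ℝ) < s * (a n : ℝ) := fun n hn => (hgrow n hn).2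
  have hzne : expCirc θ ≠ 1 := by
    intro hz
    rw [expCirc, Complex.exp_eq_one_iff] at hz
    obtain ⟨n, hn⟩ := hz
    have h2πI : (2 : ℂ) * Real.pi * Complex.I ≠ 0 := by
      simp [Complex.I_ne_zero, Real.pi_ne_zero, Complex.ofReal_ne_zero]
    have hθn : (θ : ℂ) = (n : ℂ) := by
      apply mul_left_cancel₀ h2πI
      rw [hn]; ring
    have hθr : θ = (n : ℝ) := by exact_mod_cast hθn
    rw [hθr] at hθirr
    exact Int.not_irrational n hθirr
  have hv := GDS.key_tendsto h1 hmono hL hsig hs1 hgrow' θ hzne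
  have hT := GDS.global_bound h1 hmono θ hv
  apply tendsto_zero_iff_norm_tendsto_zero.mpr
  apply hT.congr
  intro N
  rw [norm_mul, norm_inv, Complex.norm_natCast, inv_mul_eq_div]
  rfl
end

section
/- Let w(n) be the number obtained by writing n in base 2 and reading the resulting digit string in base 3; that is, if n = ∑_{i≥0} ε_i·2^i with ε_i ∈ {0,1} the binary digits of n, then w(n) = ∑_{i≥0} ε_i·3^i. If γ is an irrational real number, then the sequence γ·w(n) is equidistributed modulo 1: for every nonzero integer d, (1/N)·∑_{n=0}^{N−1} e(d·γ·w(n)) → 0 as N → ∞. -/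
open Filter

/-- `w n` is obtained by writing `n` in base 2 and reading the digit string in
base 3: if `n = ∑ εᵢ 2^i` with `εᵢ ∈ {0,1}`, then `w n = ∑ εᵢ 3^i`. -/
def baseTwoReadThree (n : ℕ) : ℕ := Nat.ofDigits 3 (Nat.digits 2 n)

lemma expCirc_add (x y : ℝ) : expCirc (x + y) = expCirc x * expCirc y := by
  unfold expCirc
  rw [← Complex.exp_add]
  push_cast
  ring_nf

lemma abs_expCirc (x : ℝ) : ‖expCirc x‖ = 1 := by
  unfold expCirc
  rw [show (2 * Real.pi * Complex.I * x : ℂ) = ((2 * Real.pi * x : ℝ) : ℂ) * Complex.I by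
    push_cast; ring]
  exact Complex.norm_exp_ofReal_mul_I _

lemma w_two_mul (m c : ℕ) (hc : c < 2) (h : 2 * m + c ≠ 0) :
    baseTwoReadThree (2 * m + c) = c + 3 * baseTwoReadThree m := by
  unfold baseTwoReadThree
  rw [Nat.digits_def' (by norm_num : 1 < 2) (Nat.pos_of_ne_zero h)]
  rw [Nat.ofDigits_cons]
  have h1 : (2 * m + c) % 2 = c := by omega
  have h2 : (2 * m + c) / 2 = m := by omega
  rw [h1, h2]

lemma w_pow_add : ∀ (k b : ℕ), b < 2 ^ k →
    baseTwoReadThree (2 ^ k + b) = 3 ^ k + baseTwoReadThree b := by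
  intro k
  induction k with
  | zero => intro b hb; interval_cases b; simp [baseTwoReadThree]
  | succ k ih =>
    intro b hb
    have hb2 : b / 2 < 2 ^ k := by omega
    have h1 : 2 ^ (k+1) + b = 2 * (2 ^ k + b / 2) + b % 2 := by omega
    rw [h1, w_two_mul _ _ (Nat.mod_lt _ (by norm_num)) (by positivity), ih _ hb2]
    rcases Nat.eq_zero_or_pos b with hb0 | hb0
    · subst hb0; simp [baseTwoReadThree]; ring
    · have : baseTwoReadThree b = b % 2 + 3 * baseTwoReadThree (b / 2) := by
        have := w_two_mul (b / 2) (b % 2) (Nat.mod_lt _ (by norm_num)) (by omega)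
        rw [← this]; congr 1; omega
      rw [this]; ring
noncomputable def Sw (θ : ℝ) (N : ℕ) : ℂ :=
  ∑ n ∈ Finset.range N, expCirc (θ * (baseTwoReadThree n : ℝ))

noncomputable def Qw (θ : ℝ) (k : ℕ) : ℂ :=
  ∏ i ∈ Finset.range k, (1 + expCirc (θ * (3 : ℝ) ^ i))

lemma Sw_split' (θ : ℝ) (k r : ℕ) (hr : r ≤ 2 ^ k) :
    Sw θ (2 ^ k + r) = Sw θ (2 ^ k) + expCirc (θ * 3 ^ k) * Sw θ r := by
  unfold Sw
  rw [Finset.sum_range_add, Finset.mul_sum]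
  congr 1
  refine Finset.sum_congr rfl fun i hi => ?_
  have hi' : i < 2 ^ k := lt_of_lt_of_le (Finset.mem_range.mp hi) hr
  rw [w_pow_add k i hi']
  push_cast
  rw [mul_add, expCirc_add]

lemma Sw_pow_two (θ : ℝ) (k : ℕ) : Sw θ (2 ^ k) = Qw θ k := by
  induction k with
  | zero =>
    simp [Sw, Qw, baseTwoReadThree, expCirc]
  | succ k ih =>
    have h : (2:ℕ) ^ (k+1) = 2 ^ k + 2 ^ k := by ring
    rw [h, Sw_split' θ k (2^k) le_rfl, ih]
    show _ = ∏ i ∈ Finset.range (k+1), (1 + expCirc (θ * (3:ℝ) ^ i))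
    rw [Finset.prod_range_succ]
    show Qw θ k + expCirc (θ * 3 ^ k) * Qw θ k = Qw θ k * (1 + expCirc (θ * (3:ℝ) ^ k))
    ring

lemma Sw_split (θ : ℝ) (k r : ℕ) (hr : r ≤ 2 ^ k) :
    Sw θ (2 ^ k + r) = Qw θ k + expCirc (θ * 3 ^ k) * Sw θ r := by
  rw [Sw_split' θ k r hr, Sw_pow_two]

lemma Sw_bound (θ : ℝ) : ∀ N : ℕ,
    ‖Sw θ N‖ ≤ ∑ i ∈ Finset.range (Nat.log 2 N + 1), ‖Qw θ i‖ := by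
  intro N
  induction N using Nat.strong_induction_on with
  | _ N ih =>
    rcases Nat.eq_zero_or_pos N with h0 | h0
    · subst h0
      simp only [Sw, Finset.range_zero, Finset.sum_empty, norm_zero]
      positivity
    set k := Nat.log 2 N with hk
    have h1 : 2 ^ k ≤ N := Nat.pow_log_le_self 2 h0.ne'
    have h2 : N < 2 ^ (k + 1) := Nat.lt_pow_succ_log_self (by norm_num) N
    set r := N - 2 ^ k with hrdef
    have hN : N = 2 ^ k + r := by omega
    have hr : r ≤ 2 ^ k := by
      have : 2 ^ (k+1) = 2 ^ k + 2 ^ k := by ring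
      omega
    have hrk : r < 2 ^ k := by
      have : 2 ^ (k+1) = 2 ^ k + 2 ^ k := by ring
      omega
    rw [hN, Sw_split θ k r hr]
    have habs : ‖Qw θ k + expCirc (θ * 3 ^ k) * Sw θ r‖ ≤
        ‖Qw θ k‖ + ‖Sw θ r‖ := by
      calc ‖Qw θ k + expCirc (θ * 3 ^ k) * Sw θ r‖
          ≤ ‖Qw θ k‖ + ‖expCirc (θ * 3 ^ k) * Sw θ r‖ :=
            norm_add_le _ _
        _ = ‖Qw θ k‖ + ‖Sw θ r‖ := by
            rw [norm_mul, abs_expCirc, one_mul]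
    refine habs.trans ?_
    rcases Nat.eq_zero_or_pos r with hr0 | hr0
    · rw [hr0]
      simp only [Sw, Finset.range_zero, Finset.sum_empty, norm_zero, add_zero]
      refine Finset.single_le_sum (fun i _ => norm_nonneg _) ?_
      simp
    · have hlt : r < N := by omega
      have ihr := ih r hlt
      have hlog : Nat.log 2 r + 1 ≤ k := by
        have := Nat.log_lt_of_lt_pow hr0.ne' hrk
        omega
      have hsub : Finset.range (Nat.log 2 r + 1) ⊆ Finset.range k :=
        Finset.range_subset_range.mpr hlog
      have : ‖Sw θ r‖ ≤ ∑ i ∈ Finset.range k, ‖Qw θ i‖ :=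
        ihr.trans (Finset.sum_le_sum_of_subset_of_nonneg hsub
          (fun i _ _ => norm_nonneg _))
      calc ‖Qw θ k‖ + ‖Sw θ r‖
          ≤ ‖Qw θ k‖ + ∑ i ∈ Finset.range k, ‖Qw θ i‖ := by
            linarith
        _ = ∑ i ∈ Finset.range (k + 1), ‖Qw θ i‖ := by
            rw [Finset.sum_range_succ]; ring
open Real in
lemma abs_one_add_expCirc (x : ℝ) :
    ‖1 + expCirc x‖ = Real.sqrt (2 + 2 * Real.cos (2 * π * x)) := by
  have h : expCirc x =
      Complex.ofReal (Real.cos (2 * π * x)) + Complex.ofReal (Real.sin (2 * π * x)) * Complex.I := by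
    unfold expCirc
    rw [show (2 * (π:ℂ) * Complex.I * x) = ((2 * π * x : ℝ) : ℂ) * Complex.I by push_cast; ring,
      Complex.exp_mul_I, Complex.ofReal_cos, Complex.ofReal_sin]
  rw [h, Complex.norm_def, Complex.normSq_apply]
  have h1 : (1 + (Complex.ofReal (Real.cos (2 * π * x)) +
      Complex.ofReal (Real.sin (2 * π * x)) * Complex.I)).re = 1 + Real.cos (2 * π * x) := by
    simp only [Complex.add_re, Complex.one_re, Complex.ofReal_re, Complex.mul_re,
      Complex.I_re, Complex.I_im, Complex.ofReal_im]
    ring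
  have h2 : (1 + (Complex.ofReal (Real.cos (2 * π * x)) +
      Complex.ofReal (Real.sin (2 * π * x)) * Complex.I)).im = Real.sin (2 * π * x) := by
    simp only [Complex.add_im, Complex.one_im, Complex.ofReal_im, Complex.mul_im,
      Complex.I_re, Complex.I_im, Complex.ofReal_re]
    ring
  rw [h1, h2]
  congr 1
  nlinarith [Real.sin_sq_add_cos_sq (2 * π * x)]

open Real in
lemma cos_two_pi_le (x δ : ℝ) (hδ0 : 0 < δ) (hδ : δ ≤ 1 / 2)
    (hx : δ ≤ |x - round x|) :
    Real.cos (2 * π * x) ≤ Real.cos (2 * π * δ) := by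
  have hy : |x - round x| ≤ 1 / 2 := abs_sub_round x
  set y := x - round x with hydef
  have hcos : Real.cos (2 * π * x) = Real.cos (2 * π * |y|) := by
    have habs : 2 * π * |y| = |2 * π * y| := by
      rw [abs_mul, abs_of_nonneg (by positivity : (0:ℝ) ≤ 2 * π)]
    rw [habs, Real.cos_abs]
    have hxy : 2 * π * x = 2 * π * y + (round x : ℤ) * (2 * π) := by
      rw [hydef]; push_cast; ring
    rw [hxy, Real.cos_add_int_mul_two_pi]
  rw [hcos]
  have hpi : 0 < π := Real.pi_pos
  apply Real.cos_le_cos_of_nonneg_of_le_pi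
  · positivity
  · nlinarith
  · nlinarith

open Real in
lemma abs_one_add_expCirc_le (x δ : ℝ) (hδ0 : 0 < δ) (hδ : δ ≤ 1 / 2)
    (hx : δ ≤ |x - round x|) :
    ‖1 + expCirc x‖ ≤ Real.sqrt (2 + 2 * Real.cos (2 * π * δ)) := by
  rw [abs_one_add_expCirc]
  apply Real.sqrt_le_sqrt
  have := cos_two_pi_le x δ hδ0 hδ hx
  linarith

open Real in
lemma sqrt_bound_lt_two (δ : ℝ) (hδ0 : 0 < δ) (hδ : δ ≤ 1 / 2) :
    Real.sqrt (2 + 2 * Real.cos (2 * π * δ)) < 2 := by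
  have hpi : 0 < π := Real.pi_pos
  have h1 : Real.cos (2 * π * δ) < Real.cos 0 := by
    apply Real.cos_lt_cos_of_nonneg_of_le_pi le_rfl (by nlinarith) (by positivity)
  rw [Real.cos_zero] at h1
  have h2 : Real.cos (2 * π * δ) ≥ -1 := Real.neg_one_le_cos _
  calc Real.sqrt (2 + 2 * Real.cos (2 * π * δ)) < Real.sqrt 4 := by
        apply Real.sqrt_lt_sqrt (by linarith) (by linarith)
    _ = 2 := by
        rw [show (4:ℝ) = 2^2 by norm_num, Real.sqrt_sq (by norm_num)]
lemma not_tendsto_round (θ : ℝ) (hθ : Irrational θ) :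
    ¬ Tendsto (fun n : ℕ => |3 ^ n * θ - round (3 ^ n * θ)|) atTop (nhds 0) := by
  intro h
  set ε : ℕ → ℝ := fun n => 3 ^ n * θ - round (3 ^ n * θ) with hε
  have h' : Tendsto (fun n => |ε n|) atTop (nhds 0) := h
  rw [Metric.tendsto_atTop] at h'
  obtain ⟨N, hN⟩ := h' (1/4) (by norm_num)
  have hsmall : ∀ n ≥ N, |ε n| < 1/4 := by
    intro n hn
    have := hN n hn
    rwa [Real.dist_eq, sub_zero, abs_abs] at this
  have hstep : ∀ n ≥ N, ε (n + 1) = 3 * ε n := by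
    intro n hn
    have hint : (3 * ε n - ε (n + 1)) = ((round (3 ^ (n+1) * θ) - 3 * round (3 ^ n * θ) : ℤ) : ℝ) := by
      simp only [hε]
      push_cast
      ring
    have habs : |3 * ε n - ε (n + 1)| < 1 := by
      have h1 := hsmall n hn
      have h2 := hsmall (n + 1) (by omega)
      calc |3 * ε n - ε (n + 1)| ≤ 3 * |ε n| + |ε (n+1)| := by
            calc |3 * ε n - ε (n + 1)| ≤ |3 * ε n| + |ε (n+1)| := abs_sub _ _
              _ = 3 * |ε n| + |ε (n+1)| := by rw [abs_mul]; norm_num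
        _ < 1 := by linarith
    rw [hint] at habs
    rw [← Int.cast_abs] at habs
    have hm : |(round (3 ^ (n+1) * θ) - 3 * round (3 ^ n * θ) : ℤ)| < 1 := by exact_mod_cast habs
    have hm0 : (round (3 ^ (n+1) * θ) - 3 * round (3 ^ n * θ) : ℤ) = 0 := Int.abs_lt_one_iff.mp hm
    rw [hm0] at hint
    push_cast at hint
    linarith
  have hgeom : ∀ j : ℕ, ε (N + j) = 3 ^ j * ε N := by
    intro j
    induction j with
    | zero => simp
    | succ j ih =>
      have : N + (j + 1) = (N + j) + 1 := by omega
      rw [this, hstep (N + j) (by omega), ih]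
      ring
  have hirr : Irrational ((3:ℝ) ^ N * θ) := by
    have h3 : ((3:ℤ) ^ N : ℤ) ≠ 0 := by positivity
    have := hθ.intCast_mul h3
    have hcast : (((3:ℤ) ^ N : ℤ) : ℝ) = (3:ℝ) ^ N := by push_cast; ring
    rwa [hcast] at this
  have hne : ε N ≠ 0 := by
    intro h0
    apply hirr.ne_int (round ((3:ℝ) ^ N * θ))
    have : (3:ℝ) ^ N * θ - round ((3:ℝ) ^ N * θ) = 0 := h0
    linarith
  obtain ⟨M, hM⟩ := h' |ε N| (abs_pos.mpr hne)
  have h1 := hM (N + M) (by omega)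
  rw [Real.dist_eq, sub_zero, abs_abs] at h1
  rw [hgeom M, abs_mul, abs_pow] at h1
  have h3 : (1:ℝ) ≤ |(3:ℝ)| ^ M := one_le_pow₀ (by norm_num)
  nlinarith [abs_pos.mpr hne]
lemma exists_delta (θ : ℝ) (hθ : Irrational θ) :
    ∃ δ : ℝ, 0 < δ ∧ δ ≤ 1/2 ∧
      {n : ℕ | δ ≤ |3 ^ n * θ - round (3 ^ n * θ)|}.Infinite := by
  by_contra h
  push_neg at h
  apply not_tendsto_round θ hθ
  rw [Metric.tendsto_atTop]
  intro ε hε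
  set δ := min ε (1/2) with hδdef
  have hδ0 : 0 < δ := lt_min hε (by norm_num)
  have hδh : δ ≤ 1/2 := min_le_right _ _
  have hfin : {n : ℕ | δ ≤ |3 ^ n * θ - round (3 ^ n * θ)|}.Finite := by
    exact h δ hδ0 hδh
  obtain ⟨N, hN⟩ := hfin.bddAbove
  refine ⟨N + 1, fun n hn => ?_⟩
  rw [Real.dist_eq, sub_zero, abs_abs]
  by_contra hcon
  push_neg at hcon
  have hmem : n ∈ {n : ℕ | δ ≤ |3 ^ n * θ - round (3 ^ n * θ)|} := by
    have : δ ≤ ε := min_le_left _ _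
    exact Set.mem_setOf.mpr (by linarith)
  have := hN hmem
  omega

lemma prod_tendsto (g : ℕ → ℝ) (hg0 : ∀ i, 0 ≤ g i) (hg1 : ∀ i, g i ≤ 1)
    (c : ℝ) (hc1 : c < 1) (B : Set ℕ) (hB : B.Infinite)
    (hgB : ∀ i ∈ B, g i ≤ c) :
    Tendsto (fun k => ∏ i ∈ Finset.range k, g i) atTop (nhds 0) := by
  have hc0 : 0 ≤ c := by
    obtain ⟨i, hi⟩ := hB.nonempty
    exact (hg0 i).trans (hgB i hi)
  rw [Metric.tendsto_atTop]
  intro ε hε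
  obtain ⟨m, hm⟩ := exists_pow_lt_of_lt_one hε hc1
  obtain ⟨T, hTB, hTcard⟩ := hB.exists_subset_card_eq m
  refine ⟨(T.sup id) + 1, fun k hk => ?_⟩
  have hT : T ⊆ Finset.range k := by
    intro i hi
    simp only [Finset.mem_range]
    have : i ≤ T.sup id := Finset.le_sup (f := id) hi
    omega
  have hprod0 : 0 ≤ ∏ i ∈ Finset.range k, g i := Finset.prod_nonneg fun i _ => hg0 i
  rw [Real.dist_eq, sub_zero, abs_of_nonneg hprod0]
  have hsplit : (∏ i ∈ Finset.range k \ T, g i) * ∏ i ∈ T, g i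
      = ∏ i ∈ Finset.range k, g i := Finset.prod_sdiff hT
  have h1 : ∏ i ∈ Finset.range k \ T, g i ≤ 1 :=
    Finset.prod_le_one (fun i _ => hg0 i) (fun i _ => hg1 i)
  have h2 : ∏ i ∈ T, g i ≤ c ^ m := by
    rw [← hTcard, ← Finset.prod_const]
    exact Finset.prod_le_prod (fun i _ => hg0 i) (fun i hi => hgB i (hTB hi))
  have h3 : 0 ≤ ∏ i ∈ T, g i := Finset.prod_nonneg fun i _ => hg0 i
  calc ∏ i ∈ Finset.range k, g i = _ := hsplit.symm
    _ ≤ 1 * c ^ m := mul_le_mul h1 h2 h3 zero_le_one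
    _ < ε := by rw [one_mul]; exact hm

lemma Qw_tendsto (θ : ℝ) (hθ : Irrational θ) :
    Tendsto (fun k : ℕ => ‖Qw θ k‖ / 2 ^ k) atTop (nhds 0) := by
  obtain ⟨δ, hδ0, hδh, hinf⟩ := exists_delta θ hθ
  set c := Real.sqrt (2 + 2 * Real.cos (2 * Real.pi * δ)) / 2 with hcdef
  have hc1 : c < 1 := by
    have := sqrt_bound_lt_two δ hδ0 hδh
    rw [hcdef]
    linarith
  set g : ℕ → ℝ := fun i => ‖1 + expCirc (θ * 3 ^ i)‖ / 2 with hgdef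
  have hg0 : ∀ i, 0 ≤ g i := fun i => by positivity
  have hg1 : ∀ i, g i ≤ 1 := by
    intro i
    have : ‖1 + expCirc (θ * 3 ^ i)‖ ≤ 2 := by
      calc ‖1 + expCirc (θ * 3 ^ i)‖
          ≤ ‖(1:ℂ)‖ + ‖expCirc (θ * 3 ^ i)‖ := norm_add_le _ _
        _ = 2 := by rw [abs_expCirc, norm_one]; norm_num
    rw [hgdef]
    simp only
    linarith
  have hgB : ∀ i ∈ {n : ℕ | δ ≤ |3 ^ n * θ - round (3 ^ n * θ)|}, g i ≤ c := by
    intro i hi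
    have hi' : δ ≤ |θ * 3 ^ i - round (θ * 3 ^ i)| := by
      rw [mul_comm]
      exact hi
    have := abs_one_add_expCirc_le (θ * 3 ^ i) δ hδ0 hδh hi'
    rw [hgdef, hcdef]
    simp only
    linarith
  have key : ∀ k, ‖Qw θ k‖ / 2 ^ k = ∏ i ∈ Finset.range k, g i := by
    intro k
    rw [Qw, norm_prod, hgdef]
    rw [Finset.prod_div_distrib, Finset.prod_const, Finset.card_range]
  exact (prod_tendsto g hg0 hg1 c hc1 _ hinf hgB).congr fun k => (key k).symm
lemma cesaro (A : ℕ → ℝ) (hA0 : ∀ i, 0 ≤ A i) (hA : ∀ i, A i ≤ 2 ^ i)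
    (h : Tendsto (fun i => A i / 2 ^ i) atTop (nhds 0)) :
    Tendsto (fun k => (∑ i ∈ Finset.range (k + 1), A i) / 2 ^ k) atTop (nhds 0) := by
  rw [Metric.tendsto_atTop] at h ⊢
  intro ε hε
  obtain ⟨K, hK⟩ := h (ε/4) (by linarith)
  have hKs : ∀ i, K ≤ i → A i ≤ ε/4 * 2 ^ i := by
    intro i hi
    have h1 := hK i hi
    rw [Real.dist_eq, sub_zero, abs_of_nonneg (div_nonneg (hA0 i) (by positivity))] at h1
    rw [div_lt_iff₀ (by positivity)] at h1
    linarith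
  have hsumsplit : ∀ k, K ≤ k + 1 → ∑ i ∈ Finset.range (k+1), A i =
      (∑ i ∈ Finset.range K, A i) + ∑ i ∈ Finset.Ico K (k+1), A i := by
    intro k hk
    rw [Finset.range_eq_Ico, Finset.range_eq_Ico]
    exact (Finset.sum_Ico_consecutive A (Nat.zero_le K) hk).symm
  set C := ∑ i ∈ Finset.range K, A i with hC
  obtain ⟨K2, hK2⟩ : ∃ K2 : ℕ, C < ε/4 * 2 ^ K2 := by
    obtain ⟨K2, hK2⟩ := pow_unbounded_of_one_lt (C / (ε/4)) (by norm_num : (1:ℝ) < 2)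
    refine ⟨K2, ?_⟩
    rw [div_lt_iff₀ (by linarith : (0:ℝ) < ε/4)] at hK2
    linarith
  refine ⟨max K K2, fun k hk => ?_⟩
  have hKk : K ≤ k := le_trans (le_max_left _ _) hk
  have hK2k : K2 ≤ k := le_trans (le_max_right _ _) hk
  have hsum : ∑ i ∈ Finset.range (k+1), A i = C + ∑ i ∈ Finset.Ico K (k+1), A i :=
    hsumsplit k (by omega)
  have h2 : ∑ i ∈ Finset.Ico K (k+1), A i ≤ ε/4 * ∑ i ∈ Finset.Ico K (k+1), (2:ℝ) ^ i := by
    rw [Finset.mul_sum]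
    exact Finset.sum_le_sum fun i hi => hKs i (Finset.mem_Ico.mp hi).1
  have h3 : ∑ i ∈ Finset.Ico K (k+1), (2:ℝ) ^ i ≤ ∑ i ∈ Finset.range (k+1), (2:ℝ) ^ i := by
    rw [Finset.range_eq_Ico]
    apply Finset.sum_le_sum_of_subset_of_nonneg
    · exact Finset.Ico_subset_Ico (by omega) le_rfl
    · intro i _ _; positivity
  have h4 : ∑ i ∈ Finset.range (k+1), (2:ℝ) ^ i = 2 ^ (k+1) - 1 := by
    rw [geom_sum_eq (by norm_num : (2:ℝ) ≠ 1)]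
    norm_num
  have h5 : (2:ℝ) ^ K2 ≤ 2 ^ k := pow_le_pow_right₀ (by norm_num) hK2k
  have hpos : (0:ℝ) < 2 ^ k := by positivity
  have htot : ∑ i ∈ Finset.range (k+1), A i < ε * 2 ^ k := by
    rw [hsum]
    have : (2:ℝ) ^ (k+1) = 2 * 2 ^ k := by ring
    nlinarith
  have hnn : 0 ≤ ∑ i ∈ Finset.range (k+1), A i := Finset.sum_nonneg fun i _ => hA0 i
  rw [Real.dist_eq, sub_zero, abs_of_nonneg (by positivity)]
  rw [div_lt_iff₀ hpos]
  linarith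
/-- If `γ` is irrational, then `γ · w n` is equidistributed
modulo 1: for every nonzero integer `d`, `(1/N) ∑_{n=0}^{N-1} e (d γ w n) → 0`. -/
theorem baseTwoReadThree_equidistributed (γ : ℝ) (hγ : Irrational γ) :
    ∀ d : ℤ, d ≠ 0 →
      Tendsto
        (fun N : ℕ => (N : ℂ)⁻¹ * ∑ n ∈ Finset.range N,
          expCirc ((d : ℝ) * γ * (baseTwoReadThree n : ℝ)))
        atTop (nhds 0) := by
  intro d hd
  set θ : ℝ := (d : ℝ) * γ with hθdef
  have hθ : Irrational θ := by
    have := hγ.intCast_mul hd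
    rwa [hθdef]
  have hfun : (fun N : ℕ => (N : ℂ)⁻¹ * ∑ n ∈ Finset.range N,
      expCirc ((d : ℝ) * γ * (baseTwoReadThree n : ℝ))) =
      fun N : ℕ => (N : ℂ)⁻¹ * Sw θ N := rfl
  rw [hfun]
  have hA0 : ∀ i, 0 ≤ ‖Qw θ i‖ := fun i => norm_nonneg _
  have hA : ∀ i, ‖Qw θ i‖ ≤ 2 ^ i := by
    intro i
    rw [Qw, norm_prod]
    calc ∏ j ∈ Finset.range i, ‖1 + expCirc (θ * 3 ^ j)‖
        ≤ ∏ j ∈ Finset.range i, (2:ℝ) := by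
          apply Finset.prod_le_prod (fun j _ => norm_nonneg _)
          intro j _
          calc ‖1 + expCirc (θ * 3 ^ j)‖
              ≤ ‖(1:ℂ)‖ + ‖expCirc (θ * 3 ^ j)‖ := norm_add_le _ _
            _ = 2 := by rw [abs_expCirc, norm_one]; norm_num
      _ = 2 ^ i := by rw [Finset.prod_const, Finset.card_range]
  have hces := cesaro (fun i => ‖Qw θ i‖) hA0 hA (Qw_tendsto θ hθ)
  have hlog : Tendsto (fun N : ℕ => Nat.log 2 N) atTop atTop := by
    apply tendsto_atTop_atTop.mpr
    intro b
    refine ⟨2 ^ b, fun n hn => ?_⟩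
    have hn0 : n ≠ 0 := by
      have : 0 < 2 ^ b := by positivity
      omega
    exact (Nat.le_log_iff_pow_le (by norm_num) hn0).mpr hn
  have hcomp := hces.comp hlog
  apply squeeze_zero_norm' ?_ hcomp
  filter_upwards [eventually_ge_atTop 1] with N hN
  show ‖(N : ℂ)⁻¹ * Sw θ N‖ ≤
    (∑ i ∈ Finset.range (Nat.log 2 N + 1), ‖Qw θ i‖) / 2 ^ (Nat.log 2 N)
  have hN0 : (0:ℝ) < N := by exact_mod_cast hN
  have hpow : (2:ℝ) ^ (Nat.log 2 N) ≤ N := by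
    have := Nat.pow_log_le_self 2 (by omega : N ≠ 0)
    exact_mod_cast this
  have hpow0 : (0:ℝ) < 2 ^ (Nat.log 2 N) := by positivity
  have hnorm : ‖(N : ℂ)⁻¹ * Sw θ N‖ = ‖Sw θ N‖ / N := by
    rw [norm_mul, norm_inv, Complex.norm_natCast]
    ring
  rw [hnorm]
  have hb := Sw_bound θ N
  have hSnn : 0 ≤ ‖Sw θ N‖ := norm_nonneg _
  exact div_le_div₀ (Finset.sum_nonneg fun i _ => hA0 i) hb hpow0 hpow
end

section
/- Let a : ℕ → ℕ be a sequence of natural numbers and suppose there are constants B and C such that a(n) ≤ B·n for each n and such that each natural number appears at most C times in the sequence a. Let γ be an irrational real number and suppose the empirical measures of the sequence γ·a(n) modulo 1 converge weakly to a probability measure μ on ℝ/ℤ. Then μ(I) ≤ 4BC·λ(I) for every arc I of ℝ/ℤ (where λ is the Haar probability measure), and consequently μ is absolutely continuous with respect to λ. -/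
open Filter MeasureTheory
open scoped ENNReal NNReal



noncomputable def cavg (γ : ℝ) (f : C(UnitAddCircle, ℂ)) (M : ℕ) : ℂ :=
  (M : ℂ)⁻¹ * ∑ m ∈ Finset.range M, f ((γ * m : ℝ) : UnitAddCircle)

theorem probVol : IsProbabilityMeasure (volume : Measure UnitAddCircle) := ⟨by simp⟩

theorem integrable_cm (f : C(UnitAddCircle, ℂ)) : Integrable f (volume : Measure UnitAddCircle) :=
  f.continuous.integrable_of_hasCompactSupport (HasCompactSupport.of_compactSpace _)

theorem integral_fourier_eq_zero {k : ℤ} (hk : k ≠ 0) :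
    (∫ x, fourier k x ∂(volume : Measure UnitAddCircle)) = 0 := by
  have h := AddCircle.integral_preimage 1 0 (fun x : UnitAddCircle => fourier k x)
  rw [← h]
  have hc : (2 * Real.pi * Complex.I * k) ≠ 0 := by
    simp [Real.pi_ne_zero, Complex.I_ne_zero, hk]
  have : ∀ a : ℝ, (fourier k (a : UnitAddCircle) : ℂ)
      = Complex.exp ((2 * Real.pi * Complex.I * k) * a) := by
    intro a
    rw [fourier_coe_apply]
    norm_num
  rw [← intervalIntegral.integral_of_le (by norm_num : (0:ℝ) ≤ 0 + 1)]
  calc (∫ a in (0:ℝ)..0+1, (fourier k (a : UnitAddCircle) : ℂ))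
      = ∫ a in (0:ℝ)..0+1, Complex.exp ((2 * Real.pi * Complex.I * k) * a) := by
        simp_rw [this]
    _ = 0 := by
        rw [integral_exp_mul_complex hc]
        have h1 : Complex.exp ((2 * Real.pi * Complex.I * k) * (0+1 : ℝ)) = 1 := by
          rw [show ((2 * Real.pi * Complex.I * (k:ℂ)) * ((0:ℝ)+1 : ℝ) : ℂ)
              = k * (2 * Real.pi * Complex.I) by push_cast; ring]
          exact Complex.exp_int_mul_two_pi_mul_I k
        have h0 : Complex.exp ((2 * Real.pi * Complex.I * k) * (0 : ℝ)) = 1 := by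
          norm_num
        rw [h1, h0]
        simp

theorem geom_part {γ : ℝ} (hγ : Irrational γ) {k : ℤ} (hk : k ≠ 0) :
    Tendsto (fun M : ℕ => (M : ℂ)⁻¹ * ∑ m ∈ Finset.range M,
      (fourier k ((γ * m : ℝ) : UnitAddCircle) : ℂ)) atTop (nhds 0) := by
  set z : ℂ := Complex.exp ((2 * Real.pi * k * γ : ℝ) * Complex.I) with hz
  have hterm : ∀ m : ℕ, (fourier k ((γ * m : ℝ) : UnitAddCircle) : ℂ) = z ^ m := by
    intro m
    rw [fourier_coe_apply, hz, ← Complex.exp_nat_mul]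
    congr 1
    push_cast
    ring
  have hz1 : z ≠ 1 := by
    intro h
    rw [hz, Complex.exp_eq_one_iff] at h
    obtain ⟨n, hn⟩ := h
    have h2 : ((2 * Real.pi : ℝ) : ℂ) ≠ 0 := by
      simp [Real.pi_ne_zero]
    have hre : ((2 * Real.pi * k * γ : ℝ) : ℂ) = ((n * (2 * Real.pi) : ℝ) : ℂ) := by
      apply mul_right_cancel₀ Complex.I_ne_zero
      rw [hn]; push_cast; ring
    have hr : 2 * Real.pi * k * γ = n * (2 * Real.pi) := Complex.ofReal_injective hre
    have hkγ : (k : ℝ) * γ = n := by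
      have h3 : (2 * Real.pi) * ((k:ℝ) * γ) = (2 * Real.pi) * (n : ℝ) := by ring_nf; ring_nf at hr; linarith
      exact mul_left_cancel₀ (by positivity) h3
    have hγeq : γ = (((n : ℚ) / (k : ℚ) : ℚ) : ℝ) := by
      have hk' : (k : ℝ) ≠ 0 := Int.cast_ne_zero.mpr hk
      push_cast
      field_simp
      linarith [hkγ]
    exact Rat.not_irrational _ (hγeq ▸ hγ)
  have hsum : ∀ M : ℕ, ∑ m ∈ Finset.range M, z ^ m = (z ^ M - 1) / (z - 1) :=
    fun M => geom_sum_eq hz1 M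
  have hzabs : ‖z‖ = 1 := by
    rw [hz, Complex.norm_exp_ofReal_mul_I]
  have hnorm : ∀ M : ℕ, ‖(M : ℂ)⁻¹ * ∑ m ∈ Finset.range M, z ^ m‖ ≤ (2 / ‖z - 1‖) / M := by
    intro M
    rw [hsum M, norm_mul, norm_inv, Complex.norm_natCast, norm_div]
    have h2 : ‖z ^ M - 1‖ ≤ 2 := by
      calc ‖z ^ M - 1‖ ≤ ‖z ^ M‖ + ‖(1:ℂ)‖ := norm_sub_le _ _
        _ ≤ 2 := by rw [norm_pow, hzabs]; norm_num
    have heq : (2 / ‖z - 1‖) / (M:ℝ) = (M:ℝ)⁻¹ * (2 / ‖z - 1‖) := by ring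
    rw [heq]
    gcongr
  refine squeeze_zero_norm (fun M => ?_) (tendsto_const_div_atTop_nhds_zero_nat (2 / ‖z - 1‖))
  simp_rw [hterm]
  exact hnorm M

theorem fourier_tendsto {γ : ℝ} (hγ : Irrational γ) (k : ℤ) :
    Tendsto (cavg γ (fourier k)) atTop
      (nhds (∫ x, fourier k x ∂(volume : Measure UnitAddCircle))) := by
  haveI : IsProbabilityMeasure (volume : Measure UnitAddCircle) := probVol
  rcases eq_or_ne k 0 with rfl | hk
  · have hval : ∀ M : ℕ, 1 ≤ M → cavg γ (fourier 0) M = 1 := by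
      intro M hM
      simp only [cavg, fourier_zero, Finset.sum_const, Finset.card_range, nsmul_eq_mul, mul_one]
      rw [inv_mul_cancel₀]
      exact_mod_cast Nat.one_le_iff_ne_zero.mp hM
    have hint : (∫ x, fourier 0 x ∂(volume : Measure UnitAddCircle)) = 1 := by
      simp only [fourier_zero]
      simp
    rw [hint]
    refine Tendsto.congr' ?_ tendsto_const_nhds
    filter_upwards [eventually_ge_atTop 1] with M hM
    exact (hval M hM).symm
  · rw [integral_fourier_eq_zero hk]
    exact geom_part hγ hk

theorem cavg_dist_le (γ : ℝ) (f g : C(UnitAddCircle, ℂ)) (M : ℕ) :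
    dist (cavg γ f M) (cavg γ g M) ≤ dist f g := by
  rw [dist_eq_norm]
  have : cavg γ f M - cavg γ g M
      = (M : ℂ)⁻¹ * ∑ m ∈ Finset.range M,
        (f ((γ * m : ℝ) : UnitAddCircle) - g ((γ * m : ℝ) : UnitAddCircle)) := by
    rw [cavg, cavg, Finset.sum_sub_distrib]
    ring
  rw [this, norm_mul, norm_inv, Complex.norm_natCast]
  have hsum : ‖∑ m ∈ Finset.range M,
      (f ((γ * m : ℝ) : UnitAddCircle) - g ((γ * m : ℝ) : UnitAddCircle))‖
      ≤ M * dist f g := by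
    calc ‖∑ m ∈ Finset.range M, (f ((γ * m : ℝ) : UnitAddCircle) - g ((γ * m : ℝ) : UnitAddCircle))‖
        ≤ ∑ m ∈ Finset.range M, ‖f ((γ * m : ℝ) : UnitAddCircle) - g ((γ * m : ℝ) : UnitAddCircle)‖ :=
          norm_sum_le _ _
      _ ≤ ∑ m ∈ Finset.range M, dist f g := by
          apply Finset.sum_le_sum
          intro m _
          rw [← dist_eq_norm]
          exact ContinuousMap.dist_apply_le_dist _
      _ = M * dist f g := by rw [Finset.sum_const, Finset.card_range, nsmul_eq_mul]
  calc (M:ℝ)⁻¹ * ‖∑ m ∈ Finset.range M, (f ((γ * m : ℝ) : UnitAddCircle) - g ((γ * m : ℝ) : UnitAddCircle))‖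
      ≤ (M:ℝ)⁻¹ * (M * dist f g) := by
        apply mul_le_mul_of_nonneg_left hsum (by positivity)
    _ ≤ dist f g := by
        rcases Nat.eq_zero_or_pos M with rfl | hM
        · simp [dist_nonneg]
        · rw [← mul_assoc, inv_mul_cancel₀ (by exact_mod_cast hM.ne' : (M:ℝ) ≠ 0), one_mul]

theorem int_dist_le (f g : C(UnitAddCircle, ℂ)) :
    dist (∫ x, f x ∂(volume : Measure UnitAddCircle)) (∫ x, g x ∂(volume : Measure UnitAddCircle))
      ≤ dist f g := by
  haveI : IsProbabilityMeasure (volume : Measure UnitAddCircle) := probVol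
  rw [dist_eq_norm, ← integral_sub (integrable_cm f) (integrable_cm g)]
  have := norm_integral_le_of_norm_le_const (μ := (volume : Measure UnitAddCircle))
    (C := dist f g) (f := fun x => f x - g x)
    (Filter.Eventually.of_forall (fun x => by
      rw [← dist_eq_norm]; exact ContinuousMap.dist_apply_le_dist x))
  simpa using this

theorem weyl_complex {γ : ℝ} (hγ : Irrational γ) (f : C(UnitAddCircle, ℂ)) :
    Tendsto (cavg γ f) atTop (nhds (∫ x, f x ∂(volume : Measure UnitAddCircle))) := by
  haveI : IsProbabilityMeasure (volume : Measure UnitAddCircle) := probVol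
  -- step 1 : true on the span of the fourier monomials
  have hspan : ∀ p ∈ Submodule.span ℂ (Set.range (@fourier 1)),
      Tendsto (cavg γ p) atTop (nhds (∫ x, p x ∂(volume : Measure UnitAddCircle))) := by
    intro p hp
    induction hp using Submodule.span_induction with
    | mem q hq =>
        obtain ⟨k, rfl⟩ := hq
        exact fourier_tendsto hγ k
    | zero =>
        have : ∀ M, cavg γ (0 : C(UnitAddCircle, ℂ)) M = 0 := by
          intro M; simp [cavg]
        have hz : (∫ x, (0 : C(UnitAddCircle, ℂ)) x ∂(volume : Measure UnitAddCircle)) = 0 := by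
          simp
        rw [hz]
        exact Tendsto.congr (fun M => (this M).symm) tendsto_const_nhds
    | add q r _ _ hq hr =>
        have haddv : ∀ M, cavg γ (q + r) M = cavg γ q M + cavg γ r M := by
          intro M
          simp only [cavg, ContinuousMap.add_apply, Finset.sum_add_distrib]
          ring
        have hint : (∫ x, (q + r) x ∂(volume : Measure UnitAddCircle))
            = (∫ x, q x ∂(volume : Measure UnitAddCircle)) + ∫ x, r x ∂(volume : Measure UnitAddCircle) := by
          simp only [ContinuousMap.add_apply]
          exact integral_add (integrable_cm q) (integrable_cm r)
        rw [hint]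
        exact Tendsto.congr (fun M => (haddv M).symm) (hq.add hr)
    | smul c q _ hq =>
        have hsmul : ∀ M, cavg γ (c • q) M = c * cavg γ q M := by
          intro M
          simp only [cavg, ContinuousMap.smul_apply, smul_eq_mul]
          rw [← Finset.mul_sum]
          ring
        have hint : (∫ x, (c • q) x ∂(volume : Measure UnitAddCircle))
            = c * ∫ x, q x ∂(volume : Measure UnitAddCircle) := by
          simp only [ContinuousMap.smul_apply, smul_eq_mul]
          rw [integral_const_mul]
        rw [hint]
        exact Tendsto.congr (fun M => (hsmul M).symm) (hq.const_mul c)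
  -- step 2 : density
  rw [Metric.tendsto_atTop]
  intro ε hε
  have hdense : f ∈ closure ((Submodule.span ℂ (Set.range (@fourier 1)) : Submodule ℂ _) : Set C(UnitAddCircle, ℂ)) := by
    have := span_fourier_closure_eq_top (T := 1)
    have hf : f ∈ (Submodule.span ℂ (Set.range (@fourier 1))).topologicalClosure := by
      rw [this]; trivial
    exact hf
  rw [Metric.mem_closure_iff] at hdense
  obtain ⟨p, hp, hfp⟩ := hdense (ε/4) (by linarith)
  obtain ⟨M₀, hM₀⟩ := (Metric.tendsto_atTop.mp (hspan p hp)) (ε/4) (by linarith)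
  refine ⟨M₀, fun M hM => ?_⟩
  calc dist (cavg γ f M) (∫ x, f x ∂(volume : Measure UnitAddCircle))
      ≤ dist (cavg γ f M) (cavg γ p M) + dist (cavg γ p M) (∫ x, p x ∂(volume : Measure UnitAddCircle))
        + dist (∫ x, p x ∂(volume : Measure UnitAddCircle)) (∫ x, f x ∂(volume : Measure UnitAddCircle)) :=
        dist_triangle4 _ _ _ _
    _ < ε/4 + ε/4 + ε/4 := by
        have h1 := cavg_dist_le γ f p M
        have h3 := int_dist_le p f
        have h3' : dist p f = dist f p := dist_comm _ _
        gcongr <;> [exact lt_of_le_of_lt h1 hfp; exact hM₀ M hM;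
          exact lt_of_le_of_lt (h3'.symm ▸ h3) hfp]
    _ < ε := by linarith

theorem weyl_real {γ : ℝ} (hγ : Irrational γ) (g : C(UnitAddCircle, ℝ)) :
    Tendsto (fun M : ℕ => (M : ℝ)⁻¹ * ∑ m ∈ Finset.range M, g ((γ * m : ℝ) : UnitAddCircle))
      atTop (nhds (∫ x, g x ∂(volume : Measure UnitAddCircle))) := by
  set f : C(UnitAddCircle, ℂ) :=
    ⟨fun x => (g x : ℂ), Complex.continuous_ofReal.comp g.continuous⟩ with hf
  have hc := weyl_complex hγ f
  have hint : (∫ x, f x ∂(volume : Measure UnitAddCircle))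
      = ((∫ x, g x ∂(volume : Measure UnitAddCircle) : ℝ) : ℂ) := by
    exact integral_ofReal
  have hre : ∀ M : ℕ, ((M : ℝ)⁻¹ * ∑ m ∈ Finset.range M, g ((γ * m : ℝ) : UnitAddCircle))
      = (cavg γ f M).re := by
    intro M
    have : cavg γ f M = (((M : ℝ)⁻¹ * ∑ m ∈ Finset.range M, g ((γ * m : ℝ) : UnitAddCircle) : ℝ) : ℂ) := by
      rw [cavg]
      push_cast
      rfl
    rw [this, Complex.ofReal_re]
  have := (Complex.continuous_re.tendsto _).comp hc
  rw [hint] at this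
  rw [Complex.ofReal_re] at this
  exact Tendsto.congr (fun M => (hre M).symm) this

theorem key_integral_bound
    (a : ℕ → ℕ) (B C : ℕ)
    (hB : ∀ n, 1 ≤ n → a n ≤ B * n)
    (hC : ∀ m : ℕ, ∀ S : Finset ℕ, (∀ n ∈ S, a n = m) → S.card ≤ C)
    (γ : ℝ) (hγ : Irrational γ)
    (μ : Measure UnitAddCircle) (hμ : IsProbabilityMeasure μ)
    (hconv : ∀ g : C(UnitAddCircle, ℝ),
      Tendsto
        (fun N : ℕ => (N : ℝ)⁻¹ * ∑ n ∈ Finset.Icc 1 N,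
          g ((γ * (a n : ℝ) : ℝ) : UnitAddCircle))
        atTop (nhds (∫ x, g x ∂μ)))
    (g : C(UnitAddCircle, ℝ)) (hg : ∀ x, 0 ≤ g x) :
    (∫ x, g x ∂μ) ≤ (B : ℝ) * C * ∫ x, g x ∂(volume : Measure UnitAddCircle) := by
  have hB1 : 1 ≤ B := by
    by_contra hB0
    push_neg at hB0
    interval_cases B
    have hz : ∀ n ∈ Finset.Icc 1 (C + 1), a n = 0 := by
      intro n hn
      have := hB n (Finset.mem_Icc.mp hn).1
      omega
    have := hC 0 (Finset.Icc 1 (C+1)) hz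
    simp [Nat.card_Icc] at this
  -- pointwise bound on the averages
  have hbound : ∀ N : ℕ, 1 ≤ N →
      (N : ℝ)⁻¹ * ∑ n ∈ Finset.Icc 1 N, g ((γ * (a n : ℝ) : ℝ) : UnitAddCircle)
        ≤ (C : ℝ) * ((N : ℝ)⁻¹ * ∑ m ∈ Finset.range (B * N + 1), g ((γ * m : ℝ) : UnitAddCircle)) := by
    intro N hN
    have hmap : ∀ n ∈ Finset.Icc 1 N, a n ∈ Finset.range (B * N + 1) := by
      intro n hn
      rw [Finset.mem_range]
      have h1 := (Finset.mem_Icc.mp hn).1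
      have h2 := (Finset.mem_Icc.mp hn).2
      have := hB n h1
      have : a n ≤ B * N := le_trans this (Nat.mul_le_mul_left B h2)
      omega
    have hsum : ∑ n ∈ Finset.Icc 1 N, g ((γ * (a n : ℝ) : ℝ) : UnitAddCircle)
        ≤ (C : ℝ) * ∑ m ∈ Finset.range (B * N + 1), g ((γ * m : ℝ) : UnitAddCircle) := by
      rw [← Finset.sum_fiberwise_of_maps_to hmap
        (fun n => g ((γ * (a n : ℝ) : ℝ) : UnitAddCircle)), Finset.mul_sum]
      apply Finset.sum_le_sum
      intro m _
      have hfib : ∀ n ∈ (Finset.Icc 1 N).filter (fun n => a n = m),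
          g ((γ * (a n : ℝ) : ℝ) : UnitAddCircle) = g ((γ * m : ℝ) : UnitAddCircle) := by
        intro n hn
        rw [(Finset.mem_filter.mp hn).2]
      rw [Finset.sum_congr rfl hfib, Finset.sum_const, nsmul_eq_mul]
      have hcard : (((Finset.Icc 1 N).filter (fun n => a n = m)).card : ℝ) ≤ (C : ℝ) := by
        exact_mod_cast hC m _ (fun n hn => (Finset.mem_filter.mp hn).2)
      exact mul_le_mul_of_nonneg_right hcard (hg _)
    calc (N : ℝ)⁻¹ * ∑ n ∈ Finset.Icc 1 N, g ((γ * (a n : ℝ) : ℝ) : UnitAddCircle)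
        ≤ (N : ℝ)⁻¹ * ((C : ℝ) * ∑ m ∈ Finset.range (B * N + 1), g ((γ * m : ℝ) : UnitAddCircle)) :=
          mul_le_mul_of_nonneg_left hsum (by positivity)
      _ = (C : ℝ) * ((N : ℝ)⁻¹ * ∑ m ∈ Finset.range (B * N + 1), g ((γ * m : ℝ) : UnitAddCircle)) := by
          ring
  -- the RHS converges to C * (B * ∫ g dλ)
  set L := ∫ x, g x ∂(volume : Measure UnitAddCircle) with hL
  have hW := weyl_real hγ g
  have hcomp : Tendsto (fun N : ℕ => ((B * N + 1 : ℕ) : ℝ)⁻¹ *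
      ∑ m ∈ Finset.range (B * N + 1), g ((γ * m : ℝ) : UnitAddCircle)) atTop (nhds L) := by
    apply hW.comp
    apply tendsto_atTop_mono (fun N => ?_) tendsto_id
    calc N = 1 * N := (one_mul N).symm
      _ ≤ B * N + 1 := by
          have := Nat.mul_le_mul_right N hB1
          omega
  have hq : Tendsto (fun N : ℕ => ((B * N + 1 : ℕ) : ℝ) * (N : ℝ)⁻¹) atTop (nhds B) := by
    have h1 : Tendsto (fun N : ℕ => (B : ℝ) + (N : ℝ)⁻¹) atTop (nhds ((B:ℝ) + 0)) :=
      tendsto_const_nhds.add (tendsto_inv_atTop_zero.comp tendsto_natCast_atTop_atTop)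
    rw [add_zero] at h1
    apply Tendsto.congr' _ h1
    filter_upwards [eventually_ge_atTop 1] with N hN
    have hN0 : (N : ℝ) ≠ 0 := by exact_mod_cast Nat.one_le_iff_ne_zero.mp hN
    push_cast
    field_simp
  have hR : Tendsto (fun N : ℕ => (C : ℝ) *
      ((N : ℝ)⁻¹ * ∑ m ∈ Finset.range (B * N + 1), g ((γ * m : ℝ) : UnitAddCircle)))
      atTop (nhds ((C : ℝ) * ((B : ℝ) * L))) := by
    have := (hq.mul hcomp).const_mul (C : ℝ)
    apply Tendsto.congr' _ this
    apply Filter.Eventually.of_forall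
    intro N
    have hBN : ((B * N + 1 : ℕ) : ℝ) ≠ 0 := by positivity
    have h2 : ((B * N + 1 : ℕ) : ℝ) * (N : ℝ)⁻¹ *
        (((B * N + 1 : ℕ) : ℝ)⁻¹ * ∑ m ∈ Finset.range (B * N + 1), g ((γ * m : ℝ) : UnitAddCircle))
        = (N : ℝ)⁻¹ * ∑ m ∈ Finset.range (B * N + 1), g ((γ * m : ℝ) : UnitAddCircle) := by
      rw [mul_comm ((B * N + 1 : ℕ) : ℝ) (N : ℝ)⁻¹, mul_assoc,
        ← mul_assoc ((B * N + 1 : ℕ) : ℝ), mul_inv_cancel₀ hBN, one_mul]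
    simp only []
    rw [h2]
  have hfin : (∫ x, g x ∂μ) ≤ (C : ℝ) * ((B : ℝ) * L) := by
    apply le_of_tendsto_of_tendsto (hconv g) hR
    filter_upwards [eventually_ge_atTop 1] with N hN
    exact hbound N hN
  calc (∫ x, g x ∂μ) ≤ (C : ℝ) * ((B : ℝ) * L) := hfin
    _ = (B : ℝ) * C * L := by ring

theorem measure_le_of_integral_le
    (μ : Measure UnitAddCircle) [IsFiniteMeasure μ] (K : ℝ) (hK : 0 ≤ K)
    (h : ∀ g : C(UnitAddCircle, ℝ), (∀ x, 0 ≤ g x) →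
      (∫ x, g x ∂μ) ≤ K * ∫ x, g x ∂(volume : Measure UnitAddCircle)) :
    ∀ s : Set UnitAddCircle, MeasurableSet s →
      μ s ≤ ENNReal.ofReal K * volume s := by
  -- first for closed sets
  have hclosed : ∀ F : Set UnitAddCircle, IsClosed F →
      μ F ≤ ENNReal.ofReal K * volume F := by
    intro F hF
    have δpos : ∀ n : ℕ, (0:ℝ) < 1 / (n + 1) := fun n => by positivity
    have δlim : Tendsto (fun n : ℕ => 1 / ((n:ℝ) + 1)) atTop (nhds 0) :=
      tendsto_one_div_add_atTop_nhds_zero_nat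
    have hν := tendsto_lintegral_thickenedIndicator_of_isClosed
      (volume : Measure UnitAddCircle) hF δpos δlim
    have hmul := ENNReal.Tendsto.const_mul hν
      (Or.inr (ENNReal.ofReal_ne_top : ENNReal.ofReal K ≠ ⊤))
    refine ge_of_tendsto hmul (Filter.Eventually.of_forall fun n => ?_)
    -- μ F ≤ ofReal K * ∫⁻ thick dν
    set T := thickenedIndicator (δpos n) F with hT
    have step1 : μ F ≤ ∫⁻ x, (T x : ℝ≥0∞) ∂μ :=
      measure_le_lintegral_thickenedIndicator μ hF.measurableSet (δpos n)
    set g : C(UnitAddCircle, ℝ) := ⟨fun x => ((T x : ℝ≥0) : ℝ),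
      NNReal.continuous_coe.comp T.continuous⟩ with hg
    have hgnn : ∀ x, 0 ≤ g x := fun x => (T x).coe_nonneg
    have hgint : Integrable (fun x => ((T x : ℝ≥0) : ℝ)) μ :=
      (NNReal.continuous_coe.comp T.continuous).integrable_of_hasCompactSupport
        (HasCompactSupport.of_compactSpace _)
    have hgint' : Integrable (fun x => ((T x : ℝ≥0) : ℝ)) (volume : Measure UnitAddCircle) :=
      (NNReal.continuous_coe.comp T.continuous).integrable_of_hasCompactSupport
        (HasCompactSupport.of_compactSpace _)
    have lμ : ∫⁻ x, (T x : ℝ≥0∞) ∂μ = ENNReal.ofReal (∫ x, g x ∂μ) :=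
      lintegral_coe_eq_integral (fun x => T x) hgint
    have lν : ∫⁻ x, (T x : ℝ≥0∞) ∂(volume : Measure UnitAddCircle)
        = ENNReal.ofReal (∫ x, g x ∂(volume : Measure UnitAddCircle)) :=
      lintegral_coe_eq_integral (fun x => T x) hgint'
    calc μ F ≤ ∫⁻ x, (T x : ℝ≥0∞) ∂μ := step1
      _ = ENNReal.ofReal (∫ x, g x ∂μ) := lμ
      _ ≤ ENNReal.ofReal (K * ∫ x, g x ∂(volume : Measure UnitAddCircle)) :=
          ENNReal.ofReal_le_ofReal (h g hgnn)
      _ = ENNReal.ofReal K * ENNReal.ofReal (∫ x, g x ∂(volume : Measure UnitAddCircle)) :=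
          ENNReal.ofReal_mul hK
      _ = ENNReal.ofReal K * ∫⁻ x, (T x : ℝ≥0∞) ∂(volume : Measure UnitAddCircle) := by rw [lν]
  -- then for measurable sets, by inner regularity
  intro s hs
  apply ENNReal.le_of_forall_pos_le_add
  intro ε hε hfin
  obtain ⟨F, hFs, hFc, hμF⟩ := hs.exists_isCompact_lt_add (measure_ne_top μ s)
    (by exact_mod_cast (ENNReal.coe_pos.mpr hε).ne' : (ε : ℝ≥0∞) ≠ 0)
  calc μ s ≤ μ F + ε := hμF.le
    _ ≤ ENNReal.ofReal K * volume F + ε := by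
        gcongr
        exact hclosed F hFc.isClosed
    _ ≤ ENNReal.ofReal K * volume s + ε := by
        gcongr


/-- Let `a : ℕ → ℕ` be a sequence with `a n ≤ B n` for each
`n ≥ 1` and such that each natural number appears at most `C` times in the
sequence.  Let `γ` be irrational and suppose the empirical measures of
`γ · a n mod 1` converge weakly to a probability measure `μ` on `ℝ/ℤ`.  Then
`μ I ≤ 4 B C · λ I` for every arc `I` of `ℝ/ℤ` (where `λ` is the Haar
probability measure), and consequently `μ` is absolutely continuous with
respect to `λ`. -/
theorem limit_measure_absolutely_continuous_of_linear_growth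
    (a : ℕ → ℕ) (B C : ℕ)
    (hB : ∀ n, 1 ≤ n → a n ≤ B * n)
    (hC : ∀ m : ℕ, ∀ S : Finset ℕ, (∀ n ∈ S, a n = m) → S.card ≤ C)
    (γ : ℝ) (hγ : Irrational γ)
    (μ : Measure UnitAddCircle) (hμ : IsProbabilityMeasure μ)
    (hconv : ∀ g : C(UnitAddCircle, ℝ),
      Tendsto
        (fun N : ℕ => (N : ℝ)⁻¹ * ∑ n ∈ Finset.Icc 1 N,
          g ((γ * (a n : ℝ) : ℝ) : UnitAddCircle))
        atTop (nhds (∫ x, g x ∂μ))) :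
    (∀ t l : ℝ,
      μ ((fun x : ℝ => (x : UnitAddCircle)) '' Set.Icc t (t + l)) ≤
        ENNReal.ofReal (4 * (B : ℝ) * (C : ℝ)) *
          volume ((fun x : ℝ => (x : UnitAddCircle)) '' Set.Icc t (t + l))) ∧
    μ ≪ (volume : Measure UnitAddCircle) := by
  haveI : IsProbabilityMeasure μ := hμ
  have hle : ∀ s : Set UnitAddCircle, MeasurableSet s →
      μ s ≤ ENNReal.ofReal ((B : ℝ) * (C : ℝ)) * volume s :=
    measure_le_of_integral_le μ ((B : ℝ) * (C : ℝ)) (by positivity)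
      (fun g hg => key_integral_bound a B C hB hC γ hγ μ hμ hconv g hg)
  constructor
  · intro t l
    set s : Set UnitAddCircle := (fun x : ℝ => (x : UnitAddCircle)) '' Set.Icc t (t + l) with hs
    have hmeas : MeasurableSet s := by
      have hcont : Continuous (fun x : ℝ => (x : UnitAddCircle)) := AddCircle.continuous_mk' 1
      exact ((isCompact_Icc.image hcont).isClosed).measurableSet
    calc μ s ≤ ENNReal.ofReal ((B : ℝ) * (C : ℝ)) * volume s := hle s hmeas
      _ ≤ ENNReal.ofReal (4 * (B : ℝ) * (C : ℝ)) * volume s := by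
          apply mul_le_mul_left
          apply ENNReal.ofReal_le_ofReal
          have : (0:ℝ) ≤ (B : ℝ) * (C : ℝ) := by positivity
          linarith
  · refine Measure.AbsolutelyContinuous.mk (fun s hs h0 => ?_)
    have := hle s hs
    rw [h0, mul_zero] at this
    exact le_antisymm this zero_le
end

section
/- Let P be a monic polynomial in ℤ[x] and let R be the set of real numbers β such that ‖β·a(n)‖ → 0 for every sequence of integers a : ℕ → ℤ satisfying the linear recurrence with characteristic polynomial P. Then R is a subring of ℝ: it contains the integers and is closed under addition and multiplication. -/
open Filter

/-- A sequence `a` satisfies the linear recurrence with (monic) characteristic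
polynomial `P`, i.e. `∑_{i=0}^{deg P} (coeff i of P) · a (n+i) = 0` for all `n`. -/
def SatisfiesLinRec (P : Polynomial ℤ) (a : ℕ → ℤ) : Prop :=
  ∀ n : ℕ, ∑ i ∈ Finset.range (P.natDegree + 1), P.coeff i * a (n + i) = 0

/-- The set of real numbers `β` such that `‖β · a n‖ → 0` for *every* integer
sequence `a` satisfying the linear recurrence with characteristic polynomial `P`. -/
def recRing (P : Polynomial ℤ) : Set ℝ :=
  {β : ℝ | ∀ a : ℕ → ℤ, SatisfiesLinRec P a →
    Tendsto (fun n : ℕ => distToInt (β * (a n : ℝ))) atTop (nhds 0)}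

lemma distToInt_nonneg (x : ℝ) : 0 ≤ distToInt x := abs_nonneg _

lemma distToInt_le (x : ℝ) (m : ℤ) : distToInt x ≤ |x - m| := round_le x m

lemma distToInt_intCast (m : ℤ) : distToInt (m : ℝ) = 0 := by
  simp [distToInt]

lemma distToInt_add_le (u v : ℝ) : distToInt (u + v) ≤ distToInt u + distToInt v := by
  calc distToInt (u + v) ≤ |u + v - ((round u + round v : ℤ) : ℝ)| := distToInt_le _ _
    _ ≤ |u - round u| + |v - round v| := by
        push_cast
        rw [show u + v - ((round u : ℝ) + round v) = (u - round u) + (v - round v) by ring]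
        exact abs_add_le _ _
    _ = distToInt u + distToInt v := rfl

lemma distToInt_add_le' (u v : ℝ) : distToInt (u + v) ≤ distToInt u + |v| := by
  calc distToInt (u + v) ≤ |u + v - (round u : ℝ)| := distToInt_le _ _
    _ ≤ |u - round u| + |v| := by
        rw [show u + v - (round u : ℝ) = (u - round u) + v by ring]
        exact abs_add_le _ _

/-- For a monic `P ∈ ℤ[x]`, the set `R` of real numbers `β`
such that `‖β · a n‖ → 0` for every integer sequence `a` satisfying the linear
recurrence with characteristic polynomial `P` is a subring of `ℝ`: it contains
the integers and is closed under addition and multiplication. -/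
theorem recRing_is_subring (P : Polynomial ℤ) (hmonic : P.Monic) :
    (∀ m : ℤ, (m : ℝ) ∈ recRing P) ∧
    (∀ x ∈ recRing P, ∀ y ∈ recRing P, x + y ∈ recRing P) ∧
    (∀ x ∈ recRing P, ∀ y ∈ recRing P, x * y ∈ recRing P) := by
  refine ⟨?_, ?_, ?_⟩
  · intro m a _
    have : (fun n : ℕ => distToInt ((m : ℝ) * (a n : ℝ))) = fun _ => 0 := by
      funext n
      rw [show (m : ℝ) * (a n : ℝ) = ((m * a n : ℤ) : ℝ) by push_cast; ring]
      exact distToInt_intCast _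
    rw [this]
    exact tendsto_const_nhds
  · intro x hx y hy a ha
    have h1 := hx a ha
    have h2 := hy a ha
    have hsum : Tendsto (fun n : ℕ =>
        distToInt (x * (a n : ℝ)) + distToInt (y * (a n : ℝ))) atTop (nhds 0) := by
      simpa using h1.add h2
    refine squeeze_zero (fun n => distToInt_nonneg _) (fun n => ?_) hsum
    rw [show (x + y) * (a n : ℝ) = x * a n + y * a n by ring]
    exact distToInt_add_le _ _
  · intro x hx y hy a ha
    have h2 := hy a ha
    -- b n = round (y * a n), e n = error
    set b : ℕ → ℤ := fun n => round (y * (a n : ℝ)) with hb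
    set e : ℕ → ℝ := fun n => y * (a n : ℝ) - b n with he
    have habs : ∀ n, |e n| = distToInt (y * (a n : ℝ)) := fun n => rfl
    have hetend : Tendsto (fun n => |e n|) atTop (nhds 0) := by
      simpa [habs] using h2
    set d := P.natDegree with hd
    set C : ℝ := ∑ i ∈ Finset.range (d + 1), |(P.coeff i : ℝ)| with hC
    have hCpos : (0:ℝ) < C + 1 := by
      have : (0:ℝ) ≤ C := Finset.sum_nonneg fun i _ => abs_nonneg _
      linarith
    have hεpos : (0:ℝ) < 1 / (C + 1) := by positivity
    -- eventually |e n| < 1/(C+1)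
    have hev : ∀ᶠ n in atTop, |e n| < 1 / (C + 1) := by
      have := hetend.eventually (eventually_lt_nhds hεpos)
      simpa using this
    obtain ⟨N, hN⟩ := eventually_atTop.mp hev
    -- the shifted rounded sequence satisfies the recurrence
    have hb' : SatisfiesLinRec P (fun n => b (n + N)) := by
      intro n
      have hreal : (((∑ i ∈ Finset.range (d + 1), P.coeff i * b (n + N + i)) : ℤ) : ℝ)
          = -∑ i ∈ Finset.range (d + 1), (P.coeff i : ℝ) * e (n + N + i) := by
        push_cast
        have hra : ∑ i ∈ Finset.range (d + 1), (P.coeff i : ℝ) * (a (n + N + i) : ℝ) = 0 := by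
          have := ha (n + N)
          have := congrArg (fun z : ℤ => (z : ℝ)) this
          push_cast at this
          simpa using this
        have : ∑ i ∈ Finset.range (d + 1), (P.coeff i : ℝ) * (b (n + N + i) : ℝ)
            = ∑ i ∈ Finset.range (d + 1), (P.coeff i : ℝ) *
              (y * (a (n + N + i) : ℝ) - e (n + N + i)) := by
          apply Finset.sum_congr rfl
          intro i _
          simp [he]
        rw [this]
        simp only [mul_sub]
        rw [Finset.sum_sub_distrib]
        have : ∑ i ∈ Finset.range (d + 1), (P.coeff i : ℝ) * (y * (a (n + N + i) : ℝ))
            = y * ∑ i ∈ Finset.range (d + 1), (P.coeff i : ℝ) * (a (n + N + i) : ℝ) := by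
          rw [Finset.mul_sum]; apply Finset.sum_congr rfl; intro i _; ring
        rw [this, hra]
        ring
      have hlt : |(((∑ i ∈ Finset.range (d + 1), P.coeff i * b (n + N + i)) : ℤ) : ℝ)| < 1 := by
        rw [hreal, abs_neg]
        calc |∑ i ∈ Finset.range (d + 1), (P.coeff i : ℝ) * e (n + N + i)|
            ≤ ∑ i ∈ Finset.range (d + 1), |(P.coeff i : ℝ)| * |e (n + N + i)| := by
              refine le_trans (Finset.abs_sum_le_sum_abs _ _) ?_
              apply Finset.sum_le_sum; intro i _; rw [abs_mul]
          _ ≤ ∑ i ∈ Finset.range (d + 1), |(P.coeff i : ℝ)| * (1 / (C + 1)) := by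
              apply Finset.sum_le_sum; intro i _
              exact mul_le_mul_of_nonneg_left
                (le_of_lt (hN (n + N + i) (by omega))) (abs_nonneg _)
          _ = C * (1 / (C + 1)) := by rw [← Finset.sum_mul]
          _ < 1 := by
              rw [mul_one_div, div_lt_one hCpos]; linarith
      have hz : ∑ i ∈ Finset.range (d + 1), P.coeff i * b (n + N + i) = 0 := by
        have : |∑ i ∈ Finset.range (d + 1), P.coeff i * b (n + N + i)| < 1 := by
          exact_mod_cast (by rwa [← Int.cast_abs] at hlt :
            ((|∑ i ∈ Finset.range (d + 1), P.coeff i * b (n + N + i)| : ℤ) : ℝ) < 1)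
        have h4 := abs_lt.mp this
        omega
      calc ∑ i ∈ Finset.range (P.natDegree + 1), P.coeff i * (fun n => b (n + N)) (n + i)
          = ∑ i ∈ Finset.range (d + 1), P.coeff i * b (n + N + i) := by
            apply Finset.sum_congr rfl
            intro i _
            simp only []
            rw [show n + i + N = n + N + i from by omega]
        _ = 0 := hz
    have h1 := hx (fun n => b (n + N)) hb'
    -- squeeze for shifted sequence
    have hbound : ∀ n : ℕ, distToInt (x * y * (a (n + N) : ℝ))
        ≤ distToInt (x * (b (n + N) : ℝ)) + |x| * |e (n + N)| := by
      intro n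
      have hxy : x * y * (a (n + N) : ℝ) = x * (b (n + N) : ℝ) + x * e (n + N) := by
        simp [he]; ring
      rw [hxy]
      have h3 := distToInt_add_le' (x * (b (n + N) : ℝ)) (x * e (n + N))
      rwa [abs_mul] at h3
    have hshift : Tendsto (fun n : ℕ => distToInt (x * y * (a (n + N) : ℝ))) atTop (nhds 0) := by
      have hetend' : Tendsto (fun n : ℕ => |e (n + N)|) atTop (nhds 0) :=
        hetend.comp (tendsto_add_atTop_nat N)
      have hsum : Tendsto (fun n : ℕ =>
          distToInt (x * (b (n + N) : ℝ)) + |x| * |e (n + N)|) atTop (nhds 0) := by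
        have := h1.add ((hetend'.const_mul |x|))
        simpa using this
      exact squeeze_zero (fun n => distToInt_nonneg _) hbound hsum
    exact (tendsto_add_atTop_iff_nat N).mp hshift
end

section
/- Let a : ℕ → ℤ be the sequence with a(1) = 1, a(2) = 2, a(3) = 3, a(4) = 4 and a(n) = 10·a(n−2) − a(n−4) for n > 4. Then for a real number β, ‖β·a(n)‖ → 0 as n → ∞ if and only if β ∈ ℤ[√6], i.e., if and only if there exist integers u, v with β = u + v·√6. -/
open Filter

namespace Stmt17


def A : ℕ → ℤ
  | 0 => 0 | 1 => 1 | 2 => 2 | 3 => 3 | 4 => 4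
  | (n+5) => 10 * A (n+3) - A (n+1)

def T : ℕ → ℤ
  | 0 => 0 | 1 => -1 | 2 => -3 | 3 => 7 | 4 => 9
  | (n+5) => 10 * T (n+3) - T (n+1)

lemma A_rec (n : ℕ) : A (n+5) = 10 * A (n+3) - A (n+1) := rfl
lemma T_rec (n : ℕ) : T (n+5) = 10 * T (n+3) - T (n+1) := rfl
lemma s_sq : Real.sqrt 6 ^ 2 = 6 := Real.sq_sqrt (by norm_num)
lemma s_gt : (2.375 : ℝ) < Real.sqrt 6 := by nlinarith [s_sq, Real.sqrt_nonneg 6]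
lemma s_lt : Real.sqrt 6 < 2.5 := by nlinarith [s_sq, Real.sqrt_nonneg 6]
lemma w_pos : (0:ℝ) < 5 - 2 * Real.sqrt 6 := by nlinarith [s_lt]
lemma w_lt_one : (5:ℝ) - 2 * Real.sqrt 6 < 1 := by nlinarith [s_gt]

lemma hirr : Irrational (Real.sqrt 6) := by
  refine irrational_nrt_of_notint_nrt 2 6 (by push_cast [s_sq]; norm_num) ?_ (by norm_num)
  rintro ⟨y, hy⟩
  have h1 : (y:ℝ)^2 = 6 := by rw [← hy]; exact s_sq
  have h2 : y^2 = 6 := by exact_mod_cast h1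
  have h3 : y ≤ 2 := by nlinarith
  have h4 : -2 ≤ y := by nlinarith
  interval_cases y <;> omega

lemma key : ∀ k : ℕ,
    Real.sqrt 6 * A (2*k+1) = T (2*k+1) + (1 + Real.sqrt 6) * (5 - 2*Real.sqrt 6)^k ∧
    Real.sqrt 6 * A (2*k+2) = T (2*k+2) + (3 + 2*Real.sqrt 6) * (5 - 2*Real.sqrt 6)^k := by
  intro k
  induction k using Nat.strong_induction_on with
  | _ k ih =>
    match k with
    | 0 =>
      constructor <;> norm_num [A, T] <;> ring_nf
    | 1 =>
      constructor
      · norm_num [A, T]; linear_combination (2:ℝ) * s_sq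
      · norm_num [A, T]; linear_combination (4:ℝ) * s_sq
    | (k+2) =>
      obtain ⟨h1, h2⟩ := ih (k+1) (by omega)
      obtain ⟨h3, h4⟩ := ih k (by omega)
      have e1 : 2*(k+1)+1 = 2*k+3 := by ring
      have e2 : 2*(k+1)+2 = 2*k+4 := by ring
      rw [e1] at h1; rw [e2] at h2
      have eA1 : ((A (2*k+5) : ℤ) : ℝ) = 10 * A (2*k+3) - A (2*k+1) := by
        rw [show 2*k+5 = (2*k)+5 from rfl, A_rec]; push_cast; ring
      have eA2 : ((A (2*k+6) : ℤ) : ℝ) = 10 * A (2*k+4) - A (2*k+2) := by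
        rw [show 2*k+6 = (2*k+1)+5 from by ring, show 2*k+4 = (2*k+1)+3 from by ring,
          show 2*k+2 = (2*k+1)+1 from by ring, A_rec]; push_cast; ring
      have eT1 : ((T (2*k+5) : ℤ) : ℝ) = 10 * T (2*k+3) - T (2*k+1) := by
        rw [show 2*k+5 = (2*k)+5 from rfl, T_rec]; push_cast; ring
      have eT2 : ((T (2*k+6) : ℤ) : ℝ) = 10 * T (2*k+4) - T (2*k+2) := by
        rw [show 2*k+6 = (2*k+1)+5 from by ring, show 2*k+4 = (2*k+1)+3 from by ring,
          show 2*k+2 = (2*k+1)+1 from by ring, T_rec]; push_cast; ring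
      constructor
      · rw [show 2*(k+2)+1 = 2*k+5 from by ring, eA1, eT1]
        linear_combination 10*h1 - h3 - 4*(1+Real.sqrt 6)*(5-2*Real.sqrt 6)^k * s_sq
      · rw [show 2*(k+2)+2 = 2*k+6 from by ring, eA2, eT2]
        linear_combination 10*h2 - h4 - 4*(3+2*Real.sqrt 6)*(5-2*Real.sqrt 6)^k * s_sq

lemma r_bound (n : ℕ) (hn : 1 ≤ n) :
    |Real.sqrt 6 * A n - T n| ≤ 8 * (5 - 2*Real.sqrt 6)^((n-1)/2) := by
  have hwp := w_pos
  rcases Nat.even_or_odd n with ⟨k, hk⟩ | ⟨k, hk⟩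
  · obtain ⟨j, rfl⟩ : ∃ j, n = 2*j+2 := ⟨(n-2)/2, by omega⟩
    have h := (key j).2
    rw [show (2*j+2-1)/2 = j from by omega]
    rw [h]
    have hp : (0:ℝ) < (5 - 2*Real.sqrt 6)^j := pow_pos hwp j
    rw [show (T (2*j+2) : ℝ) + (3 + 2*Real.sqrt 6) * (5 - 2*Real.sqrt 6)^j - T (2*j+2)
        = (3 + 2*Real.sqrt 6) * (5 - 2*Real.sqrt 6)^j from by ring]
    rw [abs_of_pos (by positivity)]
    have : (3:ℝ) + 2*Real.sqrt 6 ≤ 8 := by nlinarith [s_lt]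
    nlinarith
  · obtain ⟨j, rfl⟩ : ∃ j, n = 2*j+1 := ⟨k, by omega⟩
    have h := (key j).1
    rw [show (2*j+1-1)/2 = j from by omega]
    rw [h]
    have hp : (0:ℝ) < (5 - 2*Real.sqrt 6)^j := pow_pos hwp j
    rw [show (T (2*j+1) : ℝ) + (1 + Real.sqrt 6) * (5 - 2*Real.sqrt 6)^j - T (2*j+1)
        = (1 + Real.sqrt 6) * (5 - 2*Real.sqrt 6)^j from by ring]
    rw [abs_of_pos (by positivity)]
    have : (1:ℝ) + Real.sqrt 6 ≤ 8 := by nlinarith [s_lt]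
    nlinarith

lemma tendsto_w_pow :
    Tendsto (fun n : ℕ => (5 - 2*Real.sqrt 6)^((n-1)/2)) atTop (nhds 0) :=
  (tendsto_pow_atTop_nhds_zero_of_lt_one w_pos.le w_lt_one).comp
    (tendsto_atTop_atTop.mpr fun b => ⟨2*b+1, fun n hn => by omega⟩)

lemma distToInt_add_int (x : ℝ) (m : ℤ) : distToInt (x + m) = distToInt x := by
  unfold distToInt
  rw [round_add_intCast]
  congr 1
  push_cast
  ring

lemma distToInt_le_abs (x : ℝ) : distToInt x ≤ |x| := by
  simpa [distToInt] using round_le x 0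

lemma A_pos_mono : ∀ n : ℕ, 1 ≤ n → 0 < A n ∧ A n < A (n+2) := by
  intro n
  induction n using Nat.strong_induction_on with
  | _ n ih =>
    match n with
    | 0 => omega
    | 1 => intro _; refine ⟨by norm_num [A], by norm_num [A]⟩
    | 2 => intro _; refine ⟨by norm_num [A], by norm_num [A]⟩
    | 3 => intro _; refine ⟨by norm_num [A], by norm_num [A]⟩
    | 4 => intro _; refine ⟨by norm_num [A], by norm_num [A]⟩
    | (m+5) =>
      intro _
      obtain ⟨p3, m3⟩ := ih (m+3) (by omega) (by omega)
      rw [show m+3+2 = m+5 from by omega] at m3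
      have p5 : 0 < A (m+5) := lt_trans p3 m3
      refine ⟨p5, ?_⟩
      have hr : A (m+7) = 10 * A (m+5) - A (m+3) := by
        rw [show m+7 = (m+2)+5 from by omega, show m+5 = (m+2)+3 from by omega,
          show m+3 = (m+2)+1 from by omega]
        exact A_rec (m+2)
      rw [show m+5+2 = m+7 from by omega, hr]
      omega


lemma A1 : A 1 = 1 := rfl
lemma A2 : A 2 = 2 := rfl
lemma A3 : A 3 = 3 := rfl
lemma A4 : A 4 = 4 := rfl
lemma T1 : T 1 = -1 := rfl
lemma T2 : T 2 = -3 := rfl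

end Stmt17

open Stmt17

set_option maxHeartbeats 2000000 in
/-- Let `a` be the integer sequence with `a 1 = 1`, `a 2 = 2`,
`a 3 = 3`, `a 4 = 4` and `a n = 10 a (n-2) - a (n-4)` for `n > 4`.  Then for a
real number `β`, `‖β · a n‖ → 0` if and only if `β ∈ ℤ[√6]`, i.e. iff there are
integers `u, v` with `β = u + v √6`. -/
theorem distToInt_tendsto_zero_iff_mem_Zsqrt6
    (a : ℕ → ℤ) (h1 : a 1 = 1) (h2 : a 2 = 2) (h3 : a 3 = 3) (h4 : a 4 = 4)
    (hrec : ∀ n, 4 < n → a n = 10 * a (n - 2) - a (n - 4)) (β : ℝ) :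
    Tendsto (fun n : ℕ => distToInt (β * (a n : ℝ))) atTop (nhds 0) ↔
      ∃ u v : ℤ, β = (u : ℝ) + (v : ℝ) * Real.sqrt 6 := by
  have ha : ∀ n : ℕ, 1 ≤ n → a n = A n := by
    intro n
    induction n using Nat.strong_induction_on with
    | _ n ih =>
      match n with
      | 0 => omega
      | 1 => intro _; rw [h1, A1]
      | 2 => intro _; rw [h2, A2]
      | 3 => intro _; rw [h3, A3]
      | 4 => intro _; rw [h4, A4]
      | (m+5) =>
        intro _
        rw [hrec (m+5) (by omega), show m+5-2 = m+3 from by omega,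
          show m+5-4 = m+1 from by omega, ih (m+3) (by omega) (by omega),
          ih (m+1) (by omega) (by omega), A_rec]
  constructor
  · intro h
    have hA : Tendsto (fun n : ℕ => distToInt (β * (A n : ℝ))) atTop (nhds 0) := by
      apply h.congr'
      rw [EventuallyEq, eventually_atTop]
      exact ⟨1, fun n hn => by rw [ha n hn]⟩
    have hs6 : (0:ℝ) ≤ Real.sqrt 6 := Real.sqrt_nonneg 6
    set c : ℕ → ℤ := fun n => round (β * (A n : ℝ)) with hc
    set F : ℕ → ℝ := fun n => β * (A n : ℝ) - c n with hF
    have hFd : ∀ n, distToInt (β * (A n : ℝ)) = |F n| := by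
      intro n; simp only [distToInt, hF, hc]
    have hcF : ∀ n, (c n : ℝ) = β * A n - F n := by
      intro n; simp only [hF]; ring
    clear_value c F
    have hsmall : ∀ ε : ℝ, 0 < ε → ∃ N, ∀ n, N ≤ n → |F n| < ε := by
      intro ε hε
      obtain ⟨N, hN⟩ := Metric.tendsto_atTop.1 hA ε hε
      refine ⟨N, fun n hn => ?_⟩
      have := hN n hn
      rwa [Real.dist_eq, sub_zero, hFd n, abs_abs] at this
    have hAreal : ∀ m : ℕ, ((A (m+5) : ℤ) : ℝ) = 10 * A (m+3) - A (m+1) := by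
      intro m; rw [A_rec]; push_cast; ring
    obtain ⟨N₁, hN₁⟩ := hsmall (1/24) (by norm_num)
    have hcrec : ∀ m, N₁ ≤ m+1 → c (m+5) = 10 * c (m+3) - c (m+1) := by
      intro m hm
      have f5 := hN₁ (m+5) (by omega)
      have f3 := hN₁ (m+3) (by omega)
      have f1 := hN₁ (m+1) (by omega)
      have hcast : ((c (m+5) - (10 * c (m+3) - c (m+1)) : ℤ) : ℝ)
          = -(F (m+5)) + 10 * F (m+3) - F (m+1) := by
        push_cast
        rw [hcF (m+5), hcF (m+3), hcF (m+1), hAreal m]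
        ring
      have habs : |((c (m+5) - (10 * c (m+3) - c (m+1)) : ℤ) : ℝ)| < 1 := by
        rw [hcast]
        obtain ⟨a5, b5⟩ := abs_lt.1 f5
        obtain ⟨a3, b3⟩ := abs_lt.1 f3
        obtain ⟨a1, b1⟩ := abs_lt.1 f1
        rw [abs_lt]; constructor <;> linarith
      rw [← Int.cast_abs] at habs
      have h'' : |c (m+5) - (10 * c (m+3) - c (m+1))| < 1 := by exact_mod_cast habs
      have h''' := Int.abs_lt_one_iff.mp h''
      omega
    have hFrec : ∀ m, N₁ ≤ m+1 → F (m+5) = 10 * F (m+3) - F (m+1) := by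
      intro m hm
      have hcr : ((c (m+5)):ℝ) = 10*(c (m+3):ℝ) - c (m+1) := by
        exact_mod_cast congrArg (fun z : ℤ => (z:ℝ)) (hcrec m hm)
      simp only [hF]
      rw [hAreal m, hcr]; ring
    set g : ℕ → ℝ := fun k => F (2*k+3) - (5-2*Real.sqrt 6) * F (2*k+1) with hg
    clear_value g
    have hgrec : ∀ k, N₁ ≤ k → g (k+1) = (5+2*Real.sqrt 6) * g k := by
      intro k hk
      have e1 : 2*(k+1)+3 = 2*k+5 := by ring
      have e2 : 2*(k+1)+1 = 2*k+3 := by ring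
      simp only [hg, e1, e2]
      rw [hFrec (2*k) (by omega)]
      linear_combination (-4*F (2*k+1)) * s_sq
    have hgrow : ∀ j, |g (N₁ + j)| = (5+2*Real.sqrt 6)^j * |g N₁| := by
      intro j
      induction j with
      | zero => simp
      | succ j ihj =>
        rw [show N₁ + (j+1) = (N₁+j) + 1 from by ring, hgrec (N₁+j) (by omega), abs_mul,
          abs_of_pos (by nlinarith), ihj, pow_succ]
        ring
    have hgK : g N₁ = 0 := by
      by_contra hne
      have hδ : 0 < |g N₁| := abs_pos.2 hne
      obtain ⟨N₂, hN₂⟩ := hsmall (|g N₁|/4) (by positivity)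
      have hb3 := hN₂ (2*(N₁+N₂)+3) (by omega)
      have hb1 := hN₂ (2*(N₁+N₂)+1) (by omega)
      have hb : |g (N₁+N₂)| ≤ |F (2*(N₁+N₂)+3)| + (5-2*Real.sqrt 6) * |F (2*(N₁+N₂)+1)| := by
        simp only [hg]
        calc |F (2*(N₁+N₂)+3) - (5-2*Real.sqrt 6) * F (2*(N₁+N₂)+1)|
            ≤ |F (2*(N₁+N₂)+3)| + |(5-2*Real.sqrt 6) * F (2*(N₁+N₂)+1)| := abs_sub _ _
          _ = |F (2*(N₁+N₂)+3)| + (5-2*Real.sqrt 6) * |F (2*(N₁+N₂)+1)| := by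
              rw [abs_mul, abs_of_pos w_pos]
      have hge : |g N₁| ≤ |g (N₁+N₂)| := by
        rw [hgrow N₂]
        have h1 : (1:ℝ) ≤ (5+2*Real.sqrt 6)^N₂ := one_le_pow₀ (by nlinarith)
        nlinarith
      have hF1nn : (0:ℝ) ≤ |F (2*(N₁+N₂)+1)| := abs_nonneg _
      nlinarith [w_pos, w_lt_one]
    have hbeta : β * ((A (2*N₁+3):ℝ) - (5-2*Real.sqrt 6) * A (2*N₁+1))
        = (c (2*N₁+3):ℝ) - (5-2*Real.sqrt 6) * c (2*N₁+1) := by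
      have h0 : F (2*N₁+3) - (5-2*Real.sqrt 6) * F (2*N₁+1) = 0 := by
        have := hgK; rw [hg] at this; simpa using this
      simp only [hF] at h0
      linear_combination h0
    set e : ℤ := A (2*N₁+3) - 5*A (2*N₁+1) with he
    set f : ℤ := 2*A (2*N₁+1) with hf2
    set p : ℤ := c (2*N₁+3) - 5*c (2*N₁+1) with hp
    set q : ℤ := 2*c (2*N₁+1) with hq
    clear_value e f p q
    have hef : β * ((e:ℝ) + f * Real.sqrt 6) = (p:ℝ) + q * Real.sqrt 6 := by
      simp only [he, hf2, hp, hq]; push_cast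
      linear_combination hbeta
    obtain ⟨hA1pos, hA1lt⟩ := A_pos_mono (2*N₁+1) (by omega)
    rw [show 2*N₁+1+2 = 2*N₁+3 from by omega] at hA1lt
    have c1 : (0:ℝ) < A (2*N₁+1) := by exact_mod_cast hA1pos
    have c2 : (A (2*N₁+1):ℝ) < A (2*N₁+3) := by exact_mod_cast hA1lt
    have hepos : (0:ℝ) < (e:ℝ) + f * Real.sqrt 6 := by
      rw [he, hf2]; push_cast
      nlinarith [mul_lt_mul_of_pos_right w_lt_one c1, c1, c2]
    have hf0 : 0 < f := by rw [hf2]; omega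
    set d : ℤ := e^2 - 6*f^2 with hd
    clear_value d
    have hd0 : d ≠ 0 := by
      intro h0
      have hdr : ((e^2 - 6*f^2 : ℤ):ℝ) = 0 := by rw [← hd, h0]; simp
      push_cast at hdr
      have hzero : ((e:ℝ) + f*Real.sqrt 6) * ((e:ℝ) - f*Real.sqrt 6) = 0 := by
        linear_combination hdr - (f:ℝ)^2 * s_sq
      rcases mul_eq_zero.1 hzero with h' | h'
      · exact absurd h' (ne_of_gt hepos)
      · have hfR : (f:ℝ) ≠ 0 := by
          exact_mod_cast hf0.ne'
        apply hirr
        refine ⟨(e:ℚ)/(f:ℚ), ?_⟩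
        push_cast
        field_simp
        linarith [h']
    set P : ℤ := p*e - 6*q*f with hP
    set Q : ℤ := q*e - p*f with hQ
    clear_value P Q
    have hdb : (d:ℝ) * β = (P:ℝ) + Q * Real.sqrt 6 := by
      rw [hd, hP, hQ]; push_cast
      linear_combination ((e:ℝ) - f*Real.sqrt 6) * hef + (β*(f:ℝ)^2 - (q:ℝ)*(f:ℝ)) * s_sq
    -- divisibility
    have hQb : Tendsto (fun n : ℕ => 8*(5-2*Real.sqrt 6)^((n-1)/2)) atTop (nhds 0) := by
      simpa using tendsto_w_pow.const_mul (8:ℝ)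
    obtain ⟨N₃, hN₃⟩ := Metric.tendsto_atTop.1 hQb (1/(2*(|(Q:ℝ)|+1))) (by positivity)
    obtain ⟨N₄, hN₄⟩ := hsmall (1/(2*(|(d:ℝ)|+1))) (by positivity)
    set N₅ : ℕ := max (max N₃ N₄) 1 with hN₅
    have hdvd : ∀ n, N₅ ≤ n → d ∣ P * A n + Q * T n := by
      intro n hn
      have hn1 : 1 ≤ n := le_trans (le_max_right _ _) hn
      have hr := r_bound n hn1
      have hr2 : 8*(5-2*Real.sqrt 6)^((n-1)/2) < 1/(2*(|(Q:ℝ)|+1)) := by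
        have h' := hN₃ n (le_trans (le_trans (le_max_left _ _) (le_max_left _ _)) hn)
        rw [Real.dist_eq, sub_zero, abs_of_pos (mul_pos (by norm_num) (pow_pos w_pos _))] at h'
        exact h'
      have hFn := hN₄ n (le_trans (le_trans (le_max_right _ _) (le_max_left _ _)) hn)
      have hkey : ((P * A n + Q * T n - d * c n : ℤ) : ℝ)
          = (d:ℝ) * F n - (Q:ℝ) * (Real.sqrt 6 * A n - T n) := by
        push_cast
        rw [hcF n]
        linear_combination (-(A n : ℝ)) * hdb
      have habs : |((P * A n + Q * T n - d * c n : ℤ):ℝ)| < 1 := by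
        rw [hkey]
        have b1 : |(d:ℝ) * F n| ≤ |(d:ℝ)| * (1/(2*(|(d:ℝ)|+1))) := by
          rw [abs_mul]; exact mul_le_mul_of_nonneg_left hFn.le (abs_nonneg _)
        have b2 : |(Q:ℝ) * (Real.sqrt 6 * A n - T n)| ≤ |(Q:ℝ)| * (1/(2*(|(Q:ℝ)|+1))) := by
          rw [abs_mul]
          exact mul_le_mul_of_nonneg_left (le_trans hr (le_of_lt hr2)) (abs_nonneg _)
        have hb1' : |(d:ℝ)| * (1/(2*(|(d:ℝ)|+1))) < 1/2 := by
          rw [mul_one_div, div_lt_iff₀ (by positivity)]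
          nlinarith [abs_nonneg ((d:ℤ):ℝ)]
        have hb2' : |(Q:ℝ)| * (1/(2*(|(Q:ℝ)|+1))) ≤ 1/2 := by
          rw [mul_one_div, div_le_iff₀ (by positivity)]
          nlinarith [abs_nonneg ((Q:ℤ):ℝ)]
        calc |(d:ℝ) * F n - (Q:ℝ) * (Real.sqrt 6 * A n - T n)|
            ≤ |(d:ℝ) * F n| + |(Q:ℝ) * (Real.sqrt 6 * A n - T n)| := abs_sub _ _
          _ < 1 := by linarith
      rw [← Int.cast_abs] at habs
      have hz : |P * A n + Q * T n - d * c n| < 1 := by exact_mod_cast habs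
      exact ⟨c n, sub_eq_zero.mp (Int.abs_lt_one_iff.mp hz)⟩
    have hSrec : ∀ m : ℕ, P * A (m+1) + Q * T (m+1)
        = 10*(P*A (m+3) + Q*T (m+3)) - (P*A (m+5) + Q*T (m+5)) := by
      intro m; rw [A_rec m, T_rec m]; ring
    have hall : ∀ i : ℕ, ∀ n : ℕ, 1 ≤ n → N₅ ≤ n + i → d ∣ P * A n + Q * T n := by
      intro i
      induction i using Nat.strong_induction_on with
      | _ i ih =>
        intro n h1n h2n
        by_cases hcase : N₅ ≤ n
        · exact hdvd n hcase
        · push_neg at hcase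
          have hi : 1 ≤ i := by omega
          have d2 := ih (i-1) (by omega) (n+2) (by omega) (by omega)
          have d4 := ih (i-1) (by omega) (n+4) (by omega) (by omega)
          obtain ⟨m, rfl⟩ : ∃ m, n = m+1 := ⟨n-1, by omega⟩
          rw [hSrec m]
          rw [show m+1+2 = m+3 from by omega] at d2
          rw [show m+1+4 = m+5 from by omega] at d4
          exact dvd_sub (d2.mul_left 10) d4
    have hS1 : P * A 1 + Q * T 1 = P - Q := by rw [A1, T1]; ring
    have hS2 : P * A 2 + Q * T 2 = 2*P - 3*Q := by rw [A2, T2]; ring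
    have hd1 : d ∣ P - Q := by
      have h' := hall N₅ 1 (by omega) (by omega)
      rwa [hS1] at h'
    have hd2 : d ∣ 2*P - 3*Q := by
      have h' := hall N₅ 2 (by omega) (by omega)
      rwa [hS2] at h'
    have hdQ : d ∣ Q := by
      have hQ' : Q = 2*(P-Q) - (2*P-3*Q) := by ring
      rw [hQ']; exact dvd_sub (hd1.mul_left 2) hd2
    have hdP : d ∣ P := by
      have hP' : P = (P-Q) + Q := by ring
      rw [hP']; exact dvd_add hd1 hdQ
    obtain ⟨u, hu⟩ := hdP
    obtain ⟨v, hv⟩ := hdQ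
    refine ⟨u, v, ?_⟩
    have hdR : ((d:ℤ):ℝ) ≠ 0 := Int.cast_ne_zero.2 hd0
    have hfin : (d:ℝ) * β = (d:ℝ) * ((u:ℝ) + v*Real.sqrt 6) := by
      rw [hdb, hu, hv]; push_cast; ring
    exact mul_left_cancel₀ hdR hfin
  · rintro ⟨u, v, rfl⟩
    apply squeeze_zero' (g := fun n : ℕ => |(v:ℝ)| * (8 * (5 - 2*Real.sqrt 6)^((n-1)/2)))
    · exact Eventually.of_forall fun n => abs_nonneg _
    · rw [eventually_atTop]
      refine ⟨1, fun n hn => ?_⟩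
      rw [ha n hn]
      have key : ((u:ℝ) + v * Real.sqrt 6) * A n
          = (v:ℝ) * (Real.sqrt 6 * A n - T n) + ((u * A n + v * T n : ℤ) : ℝ) := by
        push_cast; ring
      rw [key, distToInt_add_int]
      calc distToInt ((v:ℝ) * (Real.sqrt 6 * A n - T n))
          ≤ |(v:ℝ) * (Real.sqrt 6 * A n - T n)| := distToInt_le_abs _
        _ = |(v:ℝ)| * |Real.sqrt 6 * A n - T n| := abs_mul _ _
        _ ≤ |(v:ℝ)| * (8 * (5 - 2*Real.sqrt 6)^((n-1)/2)) := by
            exact mul_le_mul_of_nonneg_left (r_bound n hn) (abs_nonneg _)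
    · have := (tendsto_w_pow.const_mul (8:ℝ)).const_mul |(v:ℝ)|
      simpa [mul_assoc] using this
end
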